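/- arXiv:2306.06721 — 7 statements merged into one kernel-verified Lean document; each statement's English description precedes it below -/
import Mathlib

section
/- Let H be a real Hilbert space, λ > 0, and φ : ℝ^d → H a feature map with ‖φ(v)‖_H ≤ 1 for all v ∈ ℝ^d. Let (u_1,v_1),…,(u_n,v_n) and (u'_1,v'_1),…,(u'_n,v'_n) be two datasets in ℝ × ℝ^d that differ in at most one index, with |u_i| ≤ 1 and |u'_i| ≤ 1 for all i. Let w and w' be minimizers over H of the kernel ridge regression objectives (λ/2)‖w‖²_H + (1/n)Σ_{i=1}^n (u_i − ⟨w, φ(v_i)⟩)² and (λ/2)‖w‖²_H + (1/n)Σ_{i=1}^n (u'_i − ⟨w, φ(v'_i)⟩)², respectively. Then for every v ∈ ℝ^d, |⟨w, φ(v)⟩ − ⟨w', φ(v)⟩| ≤ 8√2/(λ^{3/2} n) + 8/(λ n). -/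
open scoped RealInnerProductSpace

lemma krr_strong_aux {H : Type*} [NormedAddCommGroup H] [InnerProductSpace ℝ H]
    {n : ℕ} (lam : ℝ) (hlam : 0 < lam) (c : Fin n → ℝ) (a : Fin n → H) (w z : H)
    (hw : ∀ y : H, lam / 2 * ‖w‖ ^ 2 + (1 / n) * ∑ i, (c i - ⟪w, a i⟫) ^ 2 ≤
        lam / 2 * ‖y‖ ^ 2 + (1 / n) * ∑ i, (c i - ⟪y, a i⟫) ^ 2) :
    lam / 2 * ‖w‖ ^ 2 + (1 / n) * ∑ i, (c i - ⟪w, a i⟫) ^ 2 + lam / 4 * ‖z - w‖ ^ 2 ≤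
      lam / 2 * ‖z‖ ^ 2 + (1 / n) * ∑ i, (c i - ⟪z, a i⟫) ^ 2 := by
  have hm := hw ((2:ℝ)⁻¹ • (w + z))
  have hin : ∀ i : Fin n, ⟪(2:ℝ)⁻¹ • (w + z), a i⟫ = (⟪w, a i⟫ + ⟪z, a i⟫) / 2 := by
    intro i; rw [real_inner_smul_left, inner_add_left]; ring
  have hkey : ∀ i ∈ Finset.univ, (c i - ⟪(2:ℝ)⁻¹ • (w + z), a i⟫) ^ 2 ≤
      ((c i - ⟪w, a i⟫) ^ 2 + (c i - ⟪z, a i⟫) ^ 2) / 2 := by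
    intro i _
    rw [hin i]
    nlinarith [sq_nonneg (⟪w, a i⟫ - ⟪z, a i⟫)]
  have hsum : ∑ i, (c i - ⟪(2:ℝ)⁻¹ • (w + z), a i⟫) ^ 2 ≤
      ((∑ i, (c i - ⟪w, a i⟫) ^ 2) + ∑ i, (c i - ⟪z, a i⟫) ^ 2) / 2 := by
    calc ∑ i, (c i - ⟪(2:ℝ)⁻¹ • (w + z), a i⟫) ^ 2
        ≤ ∑ i, ((c i - ⟪w, a i⟫) ^ 2 + (c i - ⟪z, a i⟫) ^ 2) / 2 := Finset.sum_le_sum hkey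
      _ = ((∑ i, (c i - ⟪w, a i⟫) ^ 2) + ∑ i, (c i - ⟪z, a i⟫) ^ 2) / 2 := by
          rw [← Finset.sum_div, Finset.sum_add_distrib]
  have hnn : (0:ℝ) ≤ 1 / (n:ℝ) := by positivity
  have hpar : ‖w + z‖ ^ 2 + ‖w - z‖ ^ 2 = 2 * (‖w‖ ^ 2 + ‖z‖ ^ 2) := by
    rw [norm_add_sq_real, norm_sub_sq_real]; ring
  have hnorm : lam / 2 * ‖(2:ℝ)⁻¹ • (w + z)‖ ^ 2 =
      lam / 4 * ‖w‖ ^ 2 + lam / 4 * ‖z‖ ^ 2 - lam / 8 * ‖z - w‖ ^ 2 := by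
    rw [norm_smul]
    have h2 : ‖w - z‖ = ‖z - w‖ := norm_sub_rev w z
    simp only [norm_inv, Real.norm_ofNat]
    rw [h2] at hpar
    nlinarith [hpar]
  have hmul := mul_le_mul_of_nonneg_left hsum hnn
  rw [hnorm] at hm
  nlinarith [hm, hmul]

/-- Norm bound for a KRR minimizer with bounded labels. -/
lemma krr_norm_bound {H : Type*} [NormedAddCommGroup H] [InnerProductSpace ℝ H]
    {n : ℕ} (hn : 0 < n) (lam : ℝ) (hlam : 0 < lam) (c : Fin n → ℝ) (a : Fin n → H) (w : H)
    (hc : ∀ i, |c i| ≤ 1)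
    (hw : ∀ y : H, lam / 2 * ‖w‖ ^ 2 + (1 / n) * ∑ i, (c i - ⟪w, a i⟫) ^ 2 ≤
        lam / 2 * ‖y‖ ^ 2 + (1 / n) * ∑ i, (c i - ⟪y, a i⟫) ^ 2) :
    ‖w‖ ≤ Real.sqrt (2 / lam) := by
  have h0 := hw 0
  simp only [inner_zero_left, norm_zero, sub_zero] at h0
  have hsum1 : ∑ i, (c i) ^ 2 ≤ (n : ℝ) := by
    calc ∑ i, (c i) ^ 2 ≤ ∑ _i : Fin n, (1:ℝ) := by
          refine Finset.sum_le_sum fun i _ => ?_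
          have := abs_le.mp (hc i)
          nlinarith [this.1, this.2]
      _ = (n : ℝ) := by simp
  have hnpos : (0:ℝ) < (n:ℝ) := by exact_mod_cast hn
  have h1n : (1 / (n:ℝ)) * ∑ i, (c i) ^ 2 ≤ 1 := by
    rw [div_mul_eq_mul_div, one_mul, div_le_one hnpos]; exact hsum1
  have hSnn : (0:ℝ) ≤ (1 / (n:ℝ)) * ∑ i, (c i - ⟪w, a i⟫) ^ 2 := by positivity
  have hb : lam / 2 * ‖w‖ ^ 2 ≤ 1 := by nlinarith [h0, h1n, hSnn]
  have : ‖w‖ ^ 2 ≤ 2 / lam := by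
    rw [le_div_iff₀ hlam]; nlinarith
  have h2 : ‖w‖ ^ 2 ≤ Real.sqrt (2 / lam) ^ 2 := by
    rw [Real.sq_sqrt (by positivity : (0:ℝ) ≤ 2 / lam)]; exact this
  nlinarith [Real.sqrt_nonneg (2/lam), norm_nonneg w, h2]

set_option maxHeartbeats 1000000 in
/-- **Sensitivity of kernel ridge regression predictions** (Theorem 5 of Kusner et al.).
Let `H` be a real Hilbert space, `λ > 0`, and `φ : ℝ^d → H` a feature map with
`‖φ v‖ ≤ 1`. Let `(u_i, v_i)` and `(u'_i, v'_i)` be two datasets of size `n` in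
`ℝ × ℝ^d` differing in at most one index, with `|u_i| ≤ 1` and `|u'_i| ≤ 1`.
If `w` and `w'` minimize the respective KRR objectives with regularization `λ`,
then for every `v`, `|⟨w, φ v⟩ − ⟨w', φ v⟩| ≤ 8√2/(λ^{3/2} n) + 8/(λ n)`. -/
theorem krr_prediction_sensitivity
    {H : Type*} [NormedAddCommGroup H] [InnerProductSpace ℝ H] [CompleteSpace H]
    {d n : ℕ} (hn : 0 < n)
    (lam : ℝ) (hlam : 0 < lam)
    (φ : EuclideanSpace ℝ (Fin d) → H) (hφ : ∀ v, ‖φ v‖ ≤ 1)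
    (u u' : Fin n → ℝ) (v v' : Fin n → EuclideanSpace ℝ (Fin d))
    (hu : ∀ i, |u i| ≤ 1) (hu' : ∀ i, |u' i| ≤ 1)
    (hneighbor : ∃ i₀ : Fin n, ∀ i, i ≠ i₀ → u i = u' i ∧ v i = v' i)
    (w w' : H)
    (hw : ∀ z : H,
      lam / 2 * ‖w‖ ^ 2 + (1 / n) * ∑ i, (u i - ⟪w, φ (v i)⟫) ^ 2 ≤
        lam / 2 * ‖z‖ ^ 2 + (1 / n) * ∑ i, (u i - ⟪z, φ (v i)⟫) ^ 2)
    (hw' : ∀ z : H,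
      lam / 2 * ‖w'‖ ^ 2 + (1 / n) * ∑ i, (u' i - ⟪w', φ (v' i)⟫) ^ 2 ≤
        lam / 2 * ‖z‖ ^ 2 + (1 / n) * ∑ i, (u' i - ⟪z, φ (v' i)⟫) ^ 2) :
    ∀ z : EuclideanSpace ℝ (Fin d),
      |⟪w, φ z⟫ - ⟪w', φ z⟫| ≤
        8 * Real.sqrt 2 / (lam ^ ((3 : ℝ) / 2) * n) + 8 / (lam * n) := by
  intro z
  obtain ⟨i₀, hnb⟩ := hneighbor
  set s : ℝ := Real.sqrt (2 / lam) with hs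
  have hs0 : 0 ≤ s := Real.sqrt_nonneg _
  have hnpos : (0:ℝ) < (n:ℝ) := by exact_mod_cast hn
  have hnn : (0:ℝ) ≤ 1 / (n:ℝ) := by positivity
  -- norm bounds
  have hWb : ‖w‖ ≤ s := krr_norm_bound hn lam hlam u (fun i => φ (v i)) w hu hw
  have hW'b : ‖w'‖ ≤ s := krr_norm_bound hn lam hlam u' (fun i => φ (v' i)) w' hu' hw'
  -- strong convexity at minimizers
  have h1 := krr_strong_aux lam hlam u (fun i => φ (v i)) w w' hw
  have h2 := krr_strong_aux lam hlam u' (fun i => φ (v' i)) w' w hw'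
  set t : ℝ := ‖w - w'‖ with ht
  have ht0 : 0 ≤ t := norm_nonneg _
  have hrev : ‖w' - w‖ = t := norm_sub_rev w' w
  rw [hrev] at h1
  -- the difference of sums reduces to index i₀
  set D : Fin n → ℝ := fun i =>
    ((u i - ⟪w', φ (v i)⟫) ^ 2 - (u i - ⟪w, φ (v i)⟫) ^ 2) +
    ((u' i - ⟪w, φ (v' i)⟫) ^ 2 - (u' i - ⟪w', φ (v' i)⟫) ^ 2) with hD
  have hDsum : ∑ i, D i =
      ((∑ i, (u i - ⟪w', φ (v i)⟫) ^ 2) - ∑ i, (u i - ⟪w, φ (v i)⟫) ^ 2) +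
      ((∑ i, (u' i - ⟪w, φ (v' i)⟫) ^ 2) - ∑ i, (u' i - ⟪w', φ (v' i)⟫) ^ 2) := by
    simp [hD, Finset.sum_add_distrib, Finset.sum_sub_distrib]
  have hDsingle : ∑ i, D i = D i₀ := by
    refine Finset.sum_eq_single_of_mem i₀ (Finset.mem_univ _) fun i _ hine => ?_
    obtain ⟨h3, h4⟩ := hnb i hine
    simp only [hD, h3, h4]
    ring
  -- pointwise bound on D i₀
  have habs : ∀ (x : H) (y : EuclideanSpace ℝ (Fin d)), |⟪x, φ y⟫| ≤ ‖x‖ := by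
    intro x y
    calc |⟪x, φ y⟫| ≤ ‖x‖ * ‖φ y‖ := abs_real_inner_le_norm x (φ y)
      _ ≤ ‖x‖ * 1 := by
          exact mul_le_mul_of_nonneg_left (hφ y) (norm_nonneg x)
      _ = ‖x‖ := mul_one _
  have hDbound : D i₀ ≤ 2 * t * (2 + ‖w‖ + ‖w'‖) := by
    have hpa : |⟪w - w', φ (v i₀)⟫| ≤ t := habs _ _
    have hpb : |⟪w - w', φ (v' i₀)⟫| ≤ t := habs _ _
    have hqa : ⟪w - w', φ (v i₀)⟫ = ⟪w, φ (v i₀)⟫ - ⟪w', φ (v i₀)⟫ := inner_sub_left _ _ _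
    have hqb : ⟪w - w', φ (v' i₀)⟫ = ⟪w, φ (v' i₀)⟫ - ⟪w', φ (v' i₀)⟫ := inner_sub_left _ _ _
    have h2a : |2 * u i₀ - ⟪w, φ (v i₀)⟫ - ⟪w', φ (v i₀)⟫| ≤ 2 + ‖w‖ + ‖w'‖ := by
      have := abs_le.mp (hu i₀)
      have h5 := abs_le.mp (habs w (v i₀))
      have h6 := abs_le.mp (habs w' (v i₀))
      rw [abs_le]; constructor <;> linarith [this.1, this.2, h5.1, h5.2, h6.1, h6.2]
    have h2b : |2 * u' i₀ - ⟪w, φ (v' i₀)⟫ - ⟪w', φ (v' i₀)⟫| ≤ 2 + ‖w‖ + ‖w'‖ := by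
      have := abs_le.mp (hu' i₀)
      have h5 := abs_le.mp (habs w (v' i₀))
      have h6 := abs_le.mp (habs w' (v' i₀))
      rw [abs_le]; constructor <;> linarith [this.1, this.2, h5.1, h5.2, h6.1, h6.2]
    have key : ∀ (p q M t' : ℝ), |p| ≤ t' → |q| ≤ M → p * q ≤ t' * M := by
      intro p q M t' hp hq
      calc p * q ≤ |p * q| := le_abs_self _
        _ = |p| * |q| := abs_mul _ _
        _ ≤ t' * M := mul_le_mul hp hq (abs_nonneg q) ((abs_nonneg p).trans hp)
    have hterm1 : (⟪w, φ (v i₀)⟫ - ⟪w', φ (v i₀)⟫) *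
        (2 * u i₀ - ⟪w, φ (v i₀)⟫ - ⟪w', φ (v i₀)⟫) ≤ t * (2 + ‖w‖ + ‖w'‖) := by
      refine key _ _ _ _ ?_ h2a
      rw [← hqa]; exact hpa
    have hterm2 : (-(⟪w, φ (v' i₀)⟫ - ⟪w', φ (v' i₀)⟫)) *
        (2 * u' i₀ - ⟪w, φ (v' i₀)⟫ - ⟪w', φ (v' i₀)⟫) ≤ t * (2 + ‖w‖ + ‖w'‖) := by
      refine key _ _ _ _ ?_ h2b
      rw [abs_neg, ← hqb]; exact hpb
    have hexp : D i₀ = (⟪w, φ (v i₀)⟫ - ⟪w', φ (v i₀)⟫) *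
        (2 * u i₀ - ⟪w, φ (v i₀)⟫ - ⟪w', φ (v i₀)⟫) +
        (-(⟪w, φ (v' i₀)⟫ - ⟪w', φ (v' i₀)⟫)) *
        (2 * u' i₀ - ⟪w, φ (v' i₀)⟫ - ⟪w', φ (v' i₀)⟫) := by
      simp only [hD]; ring
    rw [hexp]; linarith
  -- master inequality
  have hmaster : lam / 2 * t ^ 2 ≤ (1 / (n:ℝ)) * (2 * t * (2 + s + s)) := by
    have hsle : (1 / (n:ℝ)) * ∑ i, D i ≤ (1 / (n:ℝ)) * (2 * t * (2 + ‖w‖ + ‖w'‖)) := by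
      rw [hDsingle]
      exact mul_le_mul_of_nonneg_left hDbound hnn
    have hle2 : (1 / (n:ℝ)) * (2 * t * (2 + ‖w‖ + ‖w'‖)) ≤
        (1 / (n:ℝ)) * (2 * t * (2 + s + s)) := by
      refine mul_le_mul_of_nonneg_left ?_ hnn
      nlinarith [ht0, hWb, hW'b]
    rw [hDsum] at hsle
    linarith [h1, h2, hsle, hle2]
  -- solve for t
  have hT : t ≤ (8 + 8 * s) / (lam * (n:ℝ)) := by
    rcases eq_or_lt_of_le ht0 with h | h
    · rw [← h]; positivity
    · rw [le_div_iff₀ (by positivity)]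
      have hm2 : lam / 2 * t ^ 2 * (n:ℝ) ≤ 2 * t * (2 + s + s) := by
        have := mul_le_mul_of_nonneg_right hmaster (le_of_lt hnpos)
        calc lam / 2 * t ^ 2 * (n:ℝ) ≤ (1 / (n:ℝ)) * (2 * t * (2 + s + s)) * (n:ℝ) := this
          _ = 2 * t * (2 + s + s) := by field_simp
      nlinarith [hm2, h]
  -- conclude
  have hfinal : |⟪w, φ z⟫ - ⟪w', φ z⟫| ≤ (8 + 8 * s) / (lam * (n:ℝ)) := by
    have : ⟪w, φ z⟫ - ⟪w', φ z⟫ = ⟪w - w', φ z⟫ := (inner_sub_left _ _ _).symm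
    rw [this]
    exact (habs _ _).trans hT
  refine hfinal.trans_eq ?_
  have hsqlam : 0 < Real.sqrt lam := Real.sqrt_pos.mpr hlam
  have hs2 : s = Real.sqrt 2 / Real.sqrt lam := by
    rw [hs, Real.sqrt_div (by norm_num : (0:ℝ) ≤ 2)]
  have h32 : lam ^ ((3:ℝ)/2) = lam * Real.sqrt lam := by
    have : lam ^ ((3:ℝ)/2) = lam ^ (1:ℝ) * lam ^ ((1:ℝ)/2) := by
      rw [← Real.rpow_add hlam]; norm_num
    rw [this, Real.rpow_one, ← Real.sqrt_eq_rpow]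
  have hl : lam ≠ 0 := ne_of_gt hlam
  have hq : Real.sqrt lam ≠ 0 := ne_of_gt hsqlam
  have hnne : (n:ℝ) ≠ 0 := ne_of_gt hnpos
  rw [h32, hs2]
  field_simp
  ring
end

section
/- Let H be a real Hilbert space, λ > 0, and φ : ℝ^d → H with ‖φ(z)‖_H ≤ 1 for all z ∈ ℝ^d. Let D = (x_i,y_i,z_i)_{i=1}^n and D' = (x'_i,y'_i,z'_i)_{i=1}^n be neighboring datasets in ℝ × ℝ × ℝ^d (differing in at most one index) with |x_i|,|y_i|,|x'_i|,|y'_i| ≤ 1 for all i. Let w_X, w_Y be KRR minimizers (regularization λ) for fitting (x_i) to (z_i) and (y_i) to (z_i) respectively, and w'_X, w'_Y the analogous minimizers for D'. Define the residual products R_i = (x_i − ⟨w_X, φ(z_i)⟩)(y_i − ⟨w_Y, φ(z_i)⟩) and R'_i = (x'_i − ⟨w'_X, φ(z'_i)⟩)(y'_i − ⟨w'_Y, φ(z'_i)⟩). Then the ℓ1 distance satisfies Σ_{i=1}^n |R_i − R'_i| ≤ C, where C = 4(1 + √2/√λ)(1 + √2/√λ + 4√2/λ^{3/2} + 4/λ).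 -/
open scoped RealInnerProductSpace

section Aux
variable {H : Type*} [NormedAddCommGroup H] [InnerProductSpace ℝ H]

lemma krr_aux_norm {n : ℕ} (hn : 0 < n) (lam : ℝ) (hlam : 0 < lam)
    (c : Fin n → ℝ) (hc : ∀ i, |c i| ≤ 1) (p : Fin n → H) (w : H)
    (hw : lam / 2 * ‖w‖ ^ 2 + (1 / n) * ∑ i, (c i - ⟪w, p i⟫) ^ 2 ≤
        lam / 2 * ‖(0:H)‖ ^ 2 + (1 / n) * ∑ i, (c i - ⟪(0:H), p i⟫) ^ 2) :
    ‖w‖ ≤ Real.sqrt 2 / Real.sqrt lam := by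
  simp only [inner_zero_left, norm_zero, sub_zero] at hw
  have hnpos : (0:ℝ) < n := by exact_mod_cast hn
  have hS : (0:ℝ) ≤ (1/(n:ℝ)) * ∑ i, (c i - ⟪w, p i⟫)^2 := by positivity
  have hc2 : ∑ i, (c i)^2 ≤ (n:ℝ) := by
    calc ∑ i, (c i)^2 ≤ ∑ _i : Fin n, (1:ℝ) := Finset.sum_le_sum (fun i _ => by
          have h := hc i
          nlinarith [abs_nonneg (c i), sq_abs (c i)])
      _ = n := by simp
  have h1 : lam/2 * ‖w‖^2 ≤ 1 := by
    have h2 : (1/(n:ℝ)) * ∑ i, (c i)^2 ≤ 1 := by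
      rw [div_mul_eq_mul_div, one_mul, div_le_one hnpos]; exact hc2
    nlinarith
  have h2 : ‖w‖^2 ≤ 2/lam := by
    rw [le_div_iff₀ hlam]; nlinarith
  calc ‖w‖ = Real.sqrt (‖w‖^2) := (Real.sqrt_sq (norm_nonneg w)).symm
    _ ≤ Real.sqrt (2/lam) := Real.sqrt_le_sqrt h2
    _ = Real.sqrt 2 / Real.sqrt lam := Real.sqrt_div (by norm_num) lam

lemma krr_aux_sc {n : ℕ} (lam : ℝ) (hlam : 0 < lam)
    (c : Fin n → ℝ) (p : Fin n → H) (w v : H)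
    (hw : ∀ u : H, lam/2*‖w‖^2 + (1/(n:ℝ))*∑ i, (c i - ⟪w, p i⟫)^2 ≤
        lam/2*‖u‖^2 + (1/(n:ℝ))*∑ i, (c i - ⟪u, p i⟫)^2) :
    lam/2*‖w‖^2 + (1/(n:ℝ))*∑ i, (c i - ⟪w, p i⟫)^2 + lam/4*‖v-w‖^2 ≤
      lam/2*‖v‖^2 + (1/(n:ℝ))*∑ i, (c i - ⟪v, p i⟫)^2 := by
  have hm := hw ((1/2 : ℝ) • (w + v))
  have hsum : ∑ i, (c i - ⟪(1/2:ℝ) • (w + v), p i⟫)^2 ≤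
      (∑ i, (c i - ⟪w, p i⟫)^2 + ∑ i, (c i - ⟪v, p i⟫)^2)/2 := by
    rw [← Finset.sum_add_distrib, Finset.sum_div]
    apply Finset.sum_le_sum
    intro i _
    have hi : ⟪(1/2:ℝ) • (w + v), p i⟫ = (⟪w, p i⟫ + ⟪v, p i⟫)/2 := by
      rw [real_inner_smul_left, inner_add_left]; ring
    rw [hi]
    nlinarith [sq_nonneg ((c i - ⟪w, p i⟫) - (c i - ⟪v, p i⟫))]
  have hnorm : ‖(1/2:ℝ) • (w + v)‖^2 = (‖w‖^2 + ‖v‖^2)/2 - ‖v-w‖^2/4 := by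
    have h1 : ‖w+v‖^2 = ‖w‖^2 + 2*⟪w,v⟫ + ‖v‖^2 := norm_add_sq_real w v
    have h2 : ‖v-w‖^2 = ‖v‖^2 - 2*⟪v,w⟫ + ‖w‖^2 := norm_sub_sq_real v w
    have h3 : ‖(1/2:ℝ) • (w + v)‖ = (1/2)*‖w+v‖ := by
      rw [norm_smul]; norm_num
    rw [h3]
    nlinarith [norm_nonneg (w+v), real_inner_comm v w]
  have hn0 : (0:ℝ) ≤ 1/(n:ℝ) := by positivity
  rw [hnorm] at hm
  nlinarith [mul_le_mul_of_nonneg_left hsum hn0]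

lemma krr_inner_diff_bound (w1 w2 u : H) (hu : ‖u‖ ≤ 1) :
    |⟪w1, u⟫ - ⟪w2, u⟫| ≤ ‖w1 - w2‖ := by
  rw [← inner_sub_left]
  calc |⟪w1 - w2, u⟫| ≤ ‖w1 - w2‖ * ‖u‖ := abs_real_inner_le_norm _ _
    _ ≤ ‖w1 - w2‖ * 1 := mul_le_mul_of_nonneg_left hu (norm_nonneg _)
    _ = ‖w1 - w2‖ := mul_one _

lemma krr_res_bound {lam : ℝ} (c : ℝ) (hc : |c| ≤ 1) (w : H)
    (hwn : ‖w‖ ≤ Real.sqrt 2 / Real.sqrt lam) (u : H) (hu : ‖u‖ ≤ 1) :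
    |c - ⟪w, u⟫| ≤ 1 + Real.sqrt 2 / Real.sqrt lam := by
  calc |c - ⟪w, u⟫| ≤ |c| + |⟪w, u⟫| := abs_sub c _
    _ ≤ 1 + Real.sqrt 2 / Real.sqrt lam := by
        refine add_le_add hc ?_
        calc |⟪w, u⟫| ≤ ‖w‖ * ‖u‖ := abs_real_inner_le_norm _ _
          _ ≤ (Real.sqrt 2 / Real.sqrt lam) * 1 :=
              mul_le_mul hwn hu (norm_nonneg _) (by positivity)
          _ = Real.sqrt 2 / Real.sqrt lam := mul_one _

lemma krr_sq_diff_bound (c B d : ℝ) (u1 u2 q : H)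
    (h1 : |c - ⟪u1, q⟫| ≤ B) (h2 : |c - ⟪u2, q⟫| ≤ B)
    (hd : ‖u1 - u2‖ ≤ d) (hq : ‖q‖ ≤ 1) (hd0 : 0 ≤ d) :
    (c - ⟪u1, q⟫) ^ 2 - (c - ⟪u2, q⟫) ^ 2 ≤ 2 * B * d := by
  have hr : |⟪u2, q⟫ - ⟪u1, q⟫| ≤ d :=
    le_trans (krr_inner_diff_bound u2 u1 q hq) (by rwa [norm_sub_rev])
  set p := c - ⟪u1, q⟫
  set q0 := c - ⟪u2, q⟫
  have hrp : ⟪u2, q⟫ - ⟪u1, q⟫ = p - q0 := by simp [p, q0]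
  rw [hrp] at hr
  calc p ^ 2 - q0 ^ 2 = (p - q0) * (p + q0) := by ring
    _ ≤ |(p - q0) * (p + q0)| := le_abs_self _
    _ = |p - q0| * |p + q0| := abs_mul _ _
    _ ≤ d * (2 * B) := by
        refine mul_le_mul hr ?_ (abs_nonneg _) hd0
        calc |p + q0| ≤ |p| + |q0| := abs_add_le _ _
          _ ≤ 2 * B := by linarith
    _ = 2 * B * d := by ring

/-- Stability of the KRR minimizer for neighboring datasets. -/
lemma krr_stability {n : ℕ} (hn : 0 < n) (lam : ℝ) (hlam : 0 < lam)
    (a a' : Fin n → ℝ) (ha : ∀ i, |a i| ≤ 1) (ha' : ∀ i, |a' i| ≤ 1)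
    (p p' : Fin n → H) (hp : ∀ i, ‖p i‖ ≤ 1) (hp' : ∀ i, ‖p' i‖ ≤ 1)
    (i₀ : Fin n) (hne : ∀ i, i ≠ i₀ → a i = a' i ∧ p i = p' i)
    (w w' : H)
    (hw : ∀ u : H, lam/2*‖w‖^2 + (1/(n:ℝ))*∑ i, (a i - ⟪w, p i⟫)^2 ≤
        lam/2*‖u‖^2 + (1/(n:ℝ))*∑ i, (a i - ⟪u, p i⟫)^2)
    (hw' : ∀ u : H, lam/2*‖w'‖^2 + (1/(n:ℝ))*∑ i, (a' i - ⟪w', p' i⟫)^2 ≤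
        lam/2*‖u‖^2 + (1/(n:ℝ))*∑ i, (a' i - ⟪u, p' i⟫)^2) :
    ‖w - w'‖ ≤ 8 * (1 + Real.sqrt 2 / Real.sqrt lam) / (lam * n) := by
  set B : ℝ := 1 + Real.sqrt 2 / Real.sqrt lam with hB
  have hB0 : 0 < B := by positivity
  have hnpos : (0:ℝ) < n := by exact_mod_cast hn
  set dX : ℝ := ‖w - w'‖ with hdX
  have hd0 : 0 ≤ dX := norm_nonneg _
  -- norm bounds
  have nw : ‖w‖ ≤ Real.sqrt 2 / Real.sqrt lam := krr_aux_norm hn lam hlam a ha p w (hw 0)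
  have nw' : ‖w'‖ ≤ Real.sqrt 2 / Real.sqrt lam := krr_aux_norm hn lam hlam a' ha' p' w' (hw' 0)
  -- strong convexity both ways
  have sc1 := krr_aux_sc lam hlam a p w w' hw
  have sc2 := krr_aux_sc lam hlam a' p' w' w hw'
  rw [show ‖w' - w‖ = dX by rw [hdX, norm_sub_rev]] at sc1
  rw [show ‖w - w'‖ = dX from rfl] at sc2
  -- the sums differ only at i₀
  have key : ∀ u : H, ∑ i, (a i - ⟪u, p i⟫)^2 - ∑ i, (a' i - ⟪u, p' i⟫)^2
      = (a i₀ - ⟪u, p i₀⟫)^2 - (a' i₀ - ⟪u, p' i₀⟫)^2 := by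
    intro u
    rw [← Finset.sum_sub_distrib]
    refine Finset.sum_eq_single_of_mem i₀ (Finset.mem_univ _) (fun i _ hi => ?_)
    obtain ⟨h1, h2⟩ := hne i hi
    rw [h1, h2]; ring
  -- pointwise bounds at i₀
  have resw : ∀ (c : ℝ), |c| ≤ 1 → ∀ q : H, ‖q‖ ≤ 1 → |c - ⟪w, q⟫| ≤ B :=
    fun c hc q hq => krr_res_bound c hc w nw q hq
  have resw' : ∀ (c : ℝ), |c| ≤ 1 → ∀ q : H, ‖q‖ ≤ 1 → |c - ⟪w', q⟫| ≤ B :=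
    fun c hc q hq => krr_res_bound c hc w' nw' q hq
  have hb1 : (a i₀ - ⟪w', p i₀⟫)^2 - (a i₀ - ⟪w, p i₀⟫)^2 ≤ 2*B*dX :=
    krr_sq_diff_bound (a i₀) B dX w' w (p i₀)
      (resw' _ (ha i₀) _ (hp i₀)) (resw _ (ha i₀) _ (hp i₀))
      (by rw [norm_sub_rev]) (hp i₀) hd0
  have hb2 : (a' i₀ - ⟪w, p' i₀⟫)^2 - (a' i₀ - ⟪w', p' i₀⟫)^2 ≤ 2*B*dX :=
    krr_sq_diff_bound (a' i₀) B dX w w' (p' i₀)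
      (resw _ (ha' i₀) _ (hp' i₀)) (resw' _ (ha' i₀) _ (hp' i₀))
      le_rfl (hp' i₀) hd0
  -- combine
  have hcomb : lam/2 * dX^2 ≤ (1/(n:ℝ)) * (4*B*dX) := by
    have e1 := key w'
    have e2 := key w
    have hmul : (1/(n:ℝ)) * ((∑ i, (a i - ⟪w', p i⟫)^2 - ∑ i, (a' i - ⟪w', p' i⟫)^2)
        - (∑ i, (a i - ⟪w, p i⟫)^2 - ∑ i, (a' i - ⟪w, p' i⟫)^2)) ≤ (1/(n:ℝ)) * (4*B*dX) := by
      refine mul_le_mul_of_nonneg_left ?_ (by positivity)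
      rw [e1, e2]
      linarith
    nlinarith [sc1, sc2, hmul]
  rcases eq_or_lt_of_le hd0 with h0 | hpos
  · rw [← h0]; positivity
  · rw [le_div_iff₀ (by positivity)]
    have h3 : (n:ℝ) * ((1/(n:ℝ))*(4*B*dX)) = 4*B*dX := by field_simp
    have h4 : (n:ℝ) * (lam/2*dX^2) ≤ 4*B*dX := by
      rw [← h3]; exact mul_le_mul_of_nonneg_left hcomb hnpos.le
    rw [← mul_le_mul_iff_right₀ hpos]
    clear_value B dX
    nlinarith [h4]

end Aux

/-- **Sensitivity of KRR residual products** (Lemma on sensitivity of residual products).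
For neighboring datasets `D = (x_i, y_i, z_i)` and `D' = (x'_i, y'_i, z'_i)` of size `n`
with all `|x_i|, |y_i|, |x'_i|, |y'_i| ≤ 1`, if `w_X, w_Y` (resp. `w'_X, w'_Y`) are KRR
minimizers with regularization `λ` for fitting `x` to `z` and `y` to `z` (resp. for `D'`),
then the ℓ1 distance between the vectors of residual products
`R_i = (x_i − ⟨w_X, φ(z_i)⟩)(y_i − ⟨w_Y, φ(z_i)⟩)` satisfies
`Σ_i |R_i − R'_i| ≤ 4(1 + √2/√λ)(1 + √2/√λ + 4√2/λ^{3/2} + 4/λ)`. -/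
theorem krr_residual_products_sensitivity
    {H : Type*} [NormedAddCommGroup H] [InnerProductSpace ℝ H] [CompleteSpace H]
    {d n : ℕ} (hn : 0 < n)
    (lam : ℝ) (hlam : 0 < lam)
    (φ : EuclideanSpace ℝ (Fin d) → H) (hφ : ∀ z, ‖φ z‖ ≤ 1)
    (x y x' y' : Fin n → ℝ) (z z' : Fin n → EuclideanSpace ℝ (Fin d))
    (hx : ∀ i, |x i| ≤ 1) (hy : ∀ i, |y i| ≤ 1)
    (hx' : ∀ i, |x' i| ≤ 1) (hy' : ∀ i, |y' i| ≤ 1)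
    (hneighbor : ∃ i₀ : Fin n, ∀ i, i ≠ i₀ → x i = x' i ∧ y i = y' i ∧ z i = z' i)
    (wX wY wX' wY' : H)
    (hwX : ∀ v : H,
      lam / 2 * ‖wX‖ ^ 2 + (1 / n) * ∑ i, (x i - ⟪wX, φ (z i)⟫) ^ 2 ≤
        lam / 2 * ‖v‖ ^ 2 + (1 / n) * ∑ i, (x i - ⟪v, φ (z i)⟫) ^ 2)
    (hwY : ∀ v : H,
      lam / 2 * ‖wY‖ ^ 2 + (1 / n) * ∑ i, (y i - ⟪wY, φ (z i)⟫) ^ 2 ≤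
        lam / 2 * ‖v‖ ^ 2 + (1 / n) * ∑ i, (y i - ⟪v, φ (z i)⟫) ^ 2)
    (hwX' : ∀ v : H,
      lam / 2 * ‖wX'‖ ^ 2 + (1 / n) * ∑ i, (x' i - ⟪wX', φ (z' i)⟫) ^ 2 ≤
        lam / 2 * ‖v‖ ^ 2 + (1 / n) * ∑ i, (x' i - ⟪v, φ (z' i)⟫) ^ 2)
    (hwY' : ∀ v : H,
      lam / 2 * ‖wY'‖ ^ 2 + (1 / n) * ∑ i, (y' i - ⟪wY', φ (z' i)⟫) ^ 2 ≤
        lam / 2 * ‖v‖ ^ 2 + (1 / n) * ∑ i, (y' i - ⟪v, φ (z' i)⟫) ^ 2) :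
    ∑ i, |(x i - ⟪wX, φ (z i)⟫) * (y i - ⟪wY, φ (z i)⟫) -
          (x' i - ⟪wX', φ (z' i)⟫) * (y' i - ⟪wY', φ (z' i)⟫)| ≤
      4 * (1 + Real.sqrt 2 / Real.sqrt lam) *
        (1 + Real.sqrt 2 / Real.sqrt lam + 4 * Real.sqrt 2 / lam ^ ((3 : ℝ) / 2) + 4 / lam) := by
  obtain ⟨i₀, hne⟩ := hneighbor
  set B : ℝ := 1 + Real.sqrt 2 / Real.sqrt lam with hB
  have hB0 : 0 < B := by positivity
  have hnpos : (0:ℝ) < n := by exact_mod_cast hn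
  set D : ℝ := 8 * B / (lam * n) with hD
  have hD0 : 0 ≤ D := by positivity
  -- norm bounds
  have nX : ‖wX‖ ≤ Real.sqrt 2 / Real.sqrt lam :=
    krr_aux_norm hn lam hlam x hx (fun i => φ (z i)) wX (hwX 0)
  have nY : ‖wY‖ ≤ Real.sqrt 2 / Real.sqrt lam :=
    krr_aux_norm hn lam hlam y hy (fun i => φ (z i)) wY (hwY 0)
  have nX' : ‖wX'‖ ≤ Real.sqrt 2 / Real.sqrt lam :=
    krr_aux_norm hn lam hlam x' hx' (fun i => φ (z' i)) wX' (hwX' 0)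
  have nY' : ‖wY'‖ ≤ Real.sqrt 2 / Real.sqrt lam :=
    krr_aux_norm hn lam hlam y' hy' (fun i => φ (z' i)) wY' (hwY' 0)
  -- stability bounds
  have hdX : ‖wX - wX'‖ ≤ D :=
    krr_stability hn lam hlam x x' hx hx' (fun i => φ (z i)) (fun i => φ (z' i))
      (fun i => hφ _) (fun i => hφ _) i₀
      (fun i hi => ⟨(hne i hi).1, by show φ (z i) = φ (z' i); rw [(hne i hi).2.2]⟩) wX wX' hwX hwX'
  have hdY : ‖wY - wY'‖ ≤ D :=
    krr_stability hn lam hlam y y' hy hy' (fun i => φ (z i)) (fun i => φ (z' i))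
      (fun i => hφ _) (fun i => hφ _) i₀
      (fun i hi => ⟨(hne i hi).2.1, by show φ (z i) = φ (z' i); rw [(hne i hi).2.2]⟩) wY wY' hwY hwY'
  -- term at i₀
  have hterm0 : |(x i₀ - ⟪wX, φ (z i₀)⟫) * (y i₀ - ⟪wY, φ (z i₀)⟫) -
      (x' i₀ - ⟪wX', φ (z' i₀)⟫) * (y' i₀ - ⟪wY', φ (z' i₀)⟫)| ≤ 2 * B * B := by
    have h1 : |(x i₀ - ⟪wX, φ (z i₀)⟫) * (y i₀ - ⟪wY, φ (z i₀)⟫)| ≤ B * B := by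
      rw [abs_mul]
      exact mul_le_mul (krr_res_bound _ (hx i₀) wX nX _ (hφ _))
        (krr_res_bound _ (hy i₀) wY nY _ (hφ _)) (abs_nonneg _) hB0.le
    have h2 : |(x' i₀ - ⟪wX', φ (z' i₀)⟫) * (y' i₀ - ⟪wY', φ (z' i₀)⟫)| ≤ B * B := by
      rw [abs_mul]
      exact mul_le_mul (krr_res_bound _ (hx' i₀) wX' nX' _ (hφ _))
        (krr_res_bound _ (hy' i₀) wY' nY' _ (hφ _)) (abs_nonneg _) hB0.le
    calc |_| ≤ |(x i₀ - ⟪wX, φ (z i₀)⟫) * (y i₀ - ⟪wY, φ (z i₀)⟫)| +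
        |(x' i₀ - ⟪wX', φ (z' i₀)⟫) * (y' i₀ - ⟪wY', φ (z' i₀)⟫)| := abs_sub _ _
      _ ≤ 2 * B * B := by linarith
  -- terms away from i₀
  have hterms : ∀ i ∈ Finset.univ.erase i₀,
      |(x i - ⟪wX, φ (z i)⟫) * (y i - ⟪wY, φ (z i)⟫) -
        (x' i - ⟪wX', φ (z' i)⟫) * (y' i - ⟪wY', φ (z' i)⟫)| ≤ 2 * (B * D) := by
    intro i hi
    obtain ⟨hx1, hy1, hz1⟩ := hne i (Finset.ne_of_mem_erase hi)
    rw [← hx1, ← hy1, ← hz1]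
    set a := ⟪wX, φ (z i)⟫
    set a' := ⟪wX', φ (z i)⟫
    set b := ⟪wY, φ (z i)⟫
    set b' := ⟪wY', φ (z i)⟫
    have ha : |a - a'| ≤ D := le_trans (krr_inner_diff_bound wX wX' _ (hφ _)) hdX
    have hb : |b - b'| ≤ D := le_trans (krr_inner_diff_bound wY wY' _ (hφ _)) hdY
    have r1 : |x i - a| ≤ B := krr_res_bound _ (hx i) wX nX _ (hφ _)
    have r2 : |y i - b'| ≤ B := krr_res_bound _ (hy i) wY' nY' _ (hφ _)
    calc |(x i - a) * (y i - b) - (x i - a') * (y i - b')|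
        = |(x i - a) * (b' - b) + (a' - a) * (y i - b')| := by ring_nf
      _ ≤ |(x i - a) * (b' - b)| + |(a' - a) * (y i - b')| := abs_add_le _ _
      _ = |x i - a| * |b' - b| + |a' - a| * |y i - b'| := by rw [abs_mul, abs_mul]
      _ ≤ B * D + D * B := by
          refine add_le_add (mul_le_mul r1 (by rwa [abs_sub_comm]) (abs_nonneg _) hB0.le)
            (mul_le_mul (by rwa [abs_sub_comm]) r2 (abs_nonneg _) hD0)
      _ = 2 * (B * D) := by ring
  -- assemble
  have hsum : ∑ i, |(x i - ⟪wX, φ (z i)⟫) * (y i - ⟪wY, φ (z i)⟫) -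
      (x' i - ⟪wX', φ (z' i)⟫) * (y' i - ⟪wY', φ (z' i)⟫)| ≤
      2 * B * B + (n : ℝ) * (2 * (B * D)) := by
    rw [← Finset.add_sum_erase _ _ (Finset.mem_univ i₀)]
    refine add_le_add hterm0 ?_
    calc ∑ i ∈ Finset.univ.erase i₀, _ ≤
        (Finset.univ.erase i₀).card • (2 * (B * D)) := Finset.sum_le_card_nsmul _ _ _ hterms
      _ = ((Finset.univ.erase i₀).card : ℝ) * (2 * (B * D)) := nsmul_eq_mul _ _
      _ ≤ (n : ℝ) * (2 * (B * D)) := by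
          refine mul_le_mul_of_nonneg_right ?_ (by positivity)
          have : (Finset.univ.erase i₀).card ≤ n := by
            simpa using (Finset.card_erase_le.trans (by simp))
          exact_mod_cast this
  have hcancel : (n : ℝ) * (2 * (B * D)) = 16 * B^2 / lam := by
    rw [hD]; field_simp; ring
  rw [hcancel] at hsum
  -- rewrite the RHS
  have hlam32 : lam ^ ((3:ℝ)/2) = lam * Real.sqrt lam := by
    rw [show (3:ℝ)/2 = 1 + 1/2 by norm_num, Real.rpow_add hlam, Real.rpow_one,
      ← Real.sqrt_eq_rpow]
  have hsl : 0 < Real.sqrt lam := Real.sqrt_pos.mpr hlam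
  have hrhs : 4 * (1 + Real.sqrt 2 / Real.sqrt lam) *
      (1 + Real.sqrt 2 / Real.sqrt lam + 4 * Real.sqrt 2 / lam ^ ((3 : ℝ) / 2) + 4 / lam)
      = 4 * B^2 + 16 * B^2 / lam := by
    rw [hlam32, hB]
    have hsl2 : (0:ℝ) < Real.sqrt lam := Real.sqrt_pos.mpr hlam
    have hs2 : Real.sqrt lam ^ 2 = lam := Real.sq_sqrt hlam.le
    set s := Real.sqrt lam with hsdef
    rw [← hs2]
    have hs0 : s ≠ 0 := hsl2.ne'
    field_simp
    ring
  rw [hrhs]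
  nlinarith [hsum, sq_nonneg B]
end

section
/- Under the setup and assumptions of the power theorem for the private GCM (P absolutely continuous, σ_P = √(Var_P(χ_P ξ_P)) < ∞, A_f·A_g = o_P(n^{-1}), B_f = o_P(1), B_g = o_P(1), with T^{(n)} the GCM statistic computed on the Laplace-noised rescaled residual products and satisfying lim_{n→∞} sup_{t∈ℝ} |Pr[T^{(n)} − √n·ρ_P/σ'_P ≤ t] − Φ(t)| = 0 for σ'_P = √(σ_P² + 2(abΔ/ε)²)), if ρ_P = E_P[Cov(X,Y | Z)] ≠ 0, then the private GCM test has asymptotic power 1: for every M > 0, Pr[|T^{(n)}| > M] → 1 as n → ∞. -/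
open MeasureTheory ProbabilityTheory Filter

/-- The sample space of one observation `(X, Y, Z) ∈ ℝ × ℝ × ℝ^d`. -/
abbrev Obs (d : ℕ) := ℝ × ℝ × EuclideanSpace ℝ (Fin d)

/-- The σ-algebra generated by the `Z`-coordinate. -/
def mZ (d : ℕ) : MeasurableSpace (Obs d) :=
  MeasurableSpace.comap (fun ω => ω.2.2) inferInstance

lemma mZ_le (d : ℕ) : mZ d ≤ (inferInstance : MeasurableSpace (Obs d)) :=
  Measurable.comap_le measurable_snd.snd

/-- Rescaling of one observation: `(x, y, z) ↦ (x/a, y/b, z)`. -/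
noncomputable def rescale {d : ℕ} (a b : ℝ) (ω : Obs d) : Obs d :=
  (ω.1 / a, ω.2.1 / b, ω.2.2)

/-- CDF of the standard Gaussian distribution `N(0,1)`. -/
noncomputable def stdGaussianCDF (t : ℝ) : ℝ :=
  ((gaussianReal 0 1) (Set.Iic t)).toReal

/-- The indices of the second (evaluation) half of a sample of size `n`. -/
def evalHalf (n : ℕ) : Finset (Fin n) := Finset.univ.filter fun i => n / 2 ≤ (i : ℕ)

/-- The GCM test statistic computed on the residual products indexed by `J`. -/
noncomputable def gcmStatOn {n : ℕ} (J : Finset (Fin n)) (R : Fin n → ℝ) : ℝ :=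
  ((∑ i ∈ J, R i) / Real.sqrt J.card) /
    Real.sqrt ((∑ i ∈ J, R i ^ 2) / J.card - ((∑ i ∈ J, R i) / J.card) ^ 2)

/-- **Asymptotic power 1 of the private GCM** (Corollary 8).
Under the setup and assumptions of the power theorem for the private GCM
(absolutely continuous `P`, `σ_P = √Var_P(χ_P ξ_P) < ∞`, good-fit conditions
`A_f A_g = o_P(n⁻¹)`, `B_f = o_P(1)`, `B_g = o_P(1)`, sample splitting, Laplace
noise), given that the recentered statistic `T⁽ⁿ⁾ − √n ρ_P/σ'_P` converges in
distribution to `N(0,1)` (with `σ'_P = √(σ_P² + 2(abΔ/ε)²)`), if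
`ρ_P = E_P[Cov(X,Y|Z)] ≠ 0` then for every `M > 0`,
`Pr[|T⁽ⁿ⁾| > M] → 1` as `n → ∞`. -/
theorem private_gcm_power_one
    {d : ℕ} (P : Measure (Obs d)) [IsProbabilityMeasure P]
    (habs : P ≪ volume)
    (a b : ℝ) (ha : 0 < a) (hb : 0 < b)
    (hXa : ∀ᵐ ω ∂P, |ω.1| ≤ a) (hYb : ∀ᵐ ω ∂P, |ω.2.1| ≤ b)
    (fP gP uP vP : EuclideanSpace ℝ (Fin d) → ℝ)
    (hfP : P[fun ω : Obs d => ω.1 | mZ d] =ᵐ[P] fun ω => fP ω.2.2)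
    (hgP : P[fun ω : Obs d => ω.2.1 | mZ d] =ᵐ[P] fun ω => gP ω.2.2)
    (huP : P[fun ω : Obs d => (ω.1 - fP ω.2.2) ^ 2 | mZ d] =ᵐ[P] fun ω => uP ω.2.2)
    (hvP : P[fun ω : Obs d => (ω.2.1 - gP ω.2.2) ^ 2 | mZ d] =ᵐ[P] fun ω => vP ω.2.2)
    -- σ_P < ∞ : the true residual product is square-integrable
    (hL2 : MemLp (fun ω : Obs d => (ω.1 - fP ω.2.2) * (ω.2.1 - gP ω.2.2)) 2 P)
    -- signal and noise of the true residuals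
    (ρP σP : ℝ)
    (hρP : ρP = ∫ ω, (ω.1 - fP ω.2.2) * (ω.2.1 - gP ω.2.2) ∂P)
    (hσP : σP = Real.sqrt
      (variance (fun ω : Obs d => (ω.1 - fP ω.2.2) * (ω.2.1 - gP ω.2.2)) P))
    -- estimators fit on the first half of the (rescaled) sample
    (fhat ghat : (n : ℕ) → (Fin n → Obs d) → EuclideanSpace ℝ (Fin d) → ℝ)
    (hfsplit : ∀ n (s s' : Fin n → Obs d),
      (∀ i : Fin n, (i : ℕ) < n / 2 → s i = s' i) → fhat n s = fhat n s')
    (hgsplit : ∀ n (s s' : Fin n → Obs d),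
      (∀ i : Fin n, (i : ℕ) < n / 2 → s i = s' i) → ghat n s = ghat n s')
    -- residual products (used on the second half of the sample)
    (R : (n : ℕ) → (Fin n → Obs d) → Fin n → ℝ)
    (hR : ∀ n s i, R n s i =
      ((s i).1 / a - fhat n (fun j => rescale a b (s j)) (s i).2.2) *
        ((s i).2.1 / b - ghat n (fun j => rescale a b (s j)) (s i).2.2))
    -- error terms of the fitting procedure over the evaluation half
    (Af Ag Bf Bg : (n : ℕ) → (Fin n → Obs d) → ℝ)
    (hAf : ∀ n s, Af n s = (1 / (evalHalf n).card) * ∑ i ∈ evalHalf n,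
      (fP (s i).2.2 / a - fhat n (fun j => rescale a b (s j)) (s i).2.2) ^ 2)
    (hAg : ∀ n s, Ag n s = (1 / (evalHalf n).card) * ∑ i ∈ evalHalf n,
      (gP (s i).2.2 / b - ghat n (fun j => rescale a b (s j)) (s i).2.2) ^ 2)
    (hBf : ∀ n s, Bf n s = (1 / (evalHalf n).card) * ∑ i ∈ evalHalf n,
      (fP (s i).2.2 / a - fhat n (fun j => rescale a b (s j)) (s i).2.2) ^ 2 *
        (vP (s i).2.2 / b ^ 2))
    (hBg : ∀ n s, Bg n s = (1 / (evalHalf n).card) * ∑ i ∈ evalHalf n,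
      (gP (s i).2.2 / b - ghat n (fun j => rescale a b (s j)) (s i).2.2) ^ 2 *
        (uP (s i).2.2 / a ^ 2))
    -- good-fit assumptions: A_f A_g = o_P(n⁻¹), B_f = o_P(1), B_g = o_P(1)
    (hAfAg : ∀ δ : ℝ, 0 < δ → Tendsto
      (fun n => (Measure.pi fun _ : Fin n => P) {s | δ < (n : ℝ) * |Af n s * Ag n s|})
      atTop (nhds 0))
    (hBfo : ∀ δ : ℝ, 0 < δ → Tendsto
      (fun n => (Measure.pi fun _ : Fin n => P) {s | δ < |Bf n s|}) atTop (nhds 0))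
    (hBgo : ∀ δ : ℝ, 0 < δ → Tendsto
      (fun n => (Measure.pi fun _ : Fin n => P) {s | δ < |Bg n s|}) atTop (nhds 0))
    -- i.i.d. Laplace noise of scale Δ/ε, independent of the data
    (Δ ε : ℝ) (hΔ : 0 < Δ) (hε : 0 < ε)
    (ν : Measure ℝ) [IsProbabilityMeasure ν]
    (hν : ν = volume.withDensity
      (fun w => ENNReal.ofReal ((2 * (Δ / ε))⁻¹ * Real.exp (-|w| / (Δ / ε)))))
    (σP' : ℝ) (hσP' : σP' = Real.sqrt (σP ^ 2 + 2 * (a * b * Δ / ε) ^ 2)) :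
    -- the conclusion of the power theorem, as a hypothesis
    ∀ hconv : Tendsto
      (fun n : ℕ => ⨆ t : ℝ,
        |(((Measure.pi fun _ : Fin n => P).prod (Measure.pi fun _ : Fin n => ν))
            {sw : (Fin n → Obs d) × (Fin n → ℝ) |
              gcmStatOn (evalHalf n) (fun i => R n sw.1 i + sw.2 i) -
                Real.sqrt n * ρP / σP' ≤ t}).toReal -
          stdGaussianCDF t|)
      atTop (nhds 0),
    -- nonzero signal
    ρP ≠ 0 →
    -- asymptotic power 1
    ∀ M : ℝ, 0 < M →
      Tendsto
        (fun n : ℕ =>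
          ((Measure.pi fun _ : Fin n => P).prod (Measure.pi fun _ : Fin n => ν))
            {sw : (Fin n → Obs d) × (Fin n → ℝ) |
              M < |gcmStatOn (evalHalf n) (fun i => R n sw.1 i + sw.2 i)|})
        atTop (nhds 1) := by 
  intro hconv hρ M hM
  classical
  let T : (n : ℕ) → (Fin n → Obs d) × (Fin n → ℝ) → ℝ :=
    fun n sw => gcmStatOn (evalHalf n) fun i => R n sw.1 i + sw.2 i
  let μ : (n : ℕ) → Measure ((Fin n → Obs d) × (Fin n → ℝ)) :=
    fun n => (Measure.pi fun _ : Fin n => P).prod (Measure.pi fun _ : Fin n => ν)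
  have hprob : ∀ n, IsProbabilityMeasure (μ n) := fun n => by
    show IsProbabilityMeasure ((Measure.pi fun _ : Fin n => P).prod _)
    infer_instance
  let c : ℕ → ℝ := fun n => Real.sqrt n * ρP / σP'
  let e : ℕ → ℝ := fun n => ⨆ t : ℝ,
    |((μ n) {sw | T n sw - c n ≤ t}).toReal - stdGaussianCDF t|
  have he0 : Tendsto e atTop (nhds 0) := hconv
  -- basic bounds
  have htr1 : ∀ (n : ℕ) (S : Set ((Fin n → Obs d) × (Fin n → ℝ))),
      ((μ n) S).toReal ≤ 1 := by
    intro n S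
    haveI := hprob n
    have h := prob_le_one (μ := μ n) (s := S)
    have h2 := ENNReal.toReal_mono ENNReal.one_ne_top h
    simpa using h2
  have hΦ01 : ∀ t : ℝ, 0 ≤ stdGaussianCDF t ∧ stdGaussianCDF t ≤ 1 := by
    intro t
    refine ⟨ENNReal.toReal_nonneg, ?_⟩
    have h := prob_le_one (μ := gaussianReal 0 1) (s := Set.Iic t)
    have h2 := ENNReal.toReal_mono ENNReal.one_ne_top h
    simpa [stdGaussianCDF] using h2
  have hkey : ∀ (n : ℕ) (t : ℝ),
      |((μ n) {sw | T n sw - c n ≤ t}).toReal - stdGaussianCDF t| ≤ e n := by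
    intro n t
    refine le_ciSup (f := fun t : ℝ =>
      |((μ n) {sw | T n sw - c n ≤ t}).toReal - stdGaussianCDF t|) ⟨1, ?_⟩ t
    rintro x ⟨u, rfl⟩
    have h1 : ((μ n) {sw | T n sw - c n ≤ u}).toReal ≤ 1 := htr1 n _
    have h0 : 0 ≤ ((μ n) {sw | T n sw - c n ≤ u}).toReal := ENNReal.toReal_nonneg
    have h2 := hΦ01 u
    exact abs_sub_le_iff.mpr ⟨by linarith [h2.1], by linarith [h2.2]⟩
  -- CDF limits
  have hΦeq : stdGaussianCDF = fun t => ProbabilityTheory.cdf (gaussianReal 0 1) t := by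
    funext t
    rw [stdGaussianCDF, ProbabilityTheory.cdf_eq_real, measureReal_def]
  have hΦ0 : Tendsto stdGaussianCDF atBot (nhds 0) := by
    rw [hΦeq]; exact ProbabilityTheory.tendsto_cdf_atBot _
  have hΦ1 : Tendsto stdGaussianCDF atTop (nhds 1) := by
    rw [hΦeq]; exact ProbabilityTheory.tendsto_cdf_atTop _
  -- positivity of σP'
  have hσ' : 0 < σP' := by
    rw [hσP']
    have h2 : 0 < (a * b * Δ / ε) ^ 2 := by positivity
    exact Real.sqrt_pos.mpr (by nlinarith [sq_nonneg σP])
  have hsqrt : Tendsto (fun n : ℕ => Real.sqrt n) atTop atTop := by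
    have h1 : Tendsto Real.sqrt atTop atTop :=
      tendsto_atTop_atTop_of_monotone (fun x y h => Real.sqrt_le_sqrt h)
        (fun r => ⟨r ^ 2, by rw [Real.sqrt_sq_eq_abs]; exact le_abs_self r⟩)
    exact h1.comp tendsto_natCast_atTop_atTop
  -- reduce to real-valued convergence
  show Tendsto (fun n : ℕ => (μ n) {sw | M < |T n sw|}) atTop (nhds 1)
  suffices h : Tendsto (fun n : ℕ => ((μ n) {sw | M < |T n sw|}).toReal) atTop (nhds 1) by
    have h2 : Tendsto (fun n : ℕ => ENNReal.ofReal (((μ n) {sw | M < |T n sw|}).toReal))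
        atTop (nhds (ENNReal.ofReal 1)) := ENNReal.tendsto_ofReal h
    have h3 : (fun n : ℕ => ENNReal.ofReal (((μ n) {sw | M < |T n sw|}).toReal)) =
        fun n : ℕ => (μ n) {sw | M < |T n sw|} := by
      funext n
      haveI := hprob n
      exact ENNReal.ofReal_toReal (measure_ne_top _ _)
    rwa [h3, ENNReal.ofReal_one] at h2
  rcases hρ.lt_or_gt with hneg | hpos
  · -- ρP < 0 : c n → -∞, and {T ≤ -2M} ⊆ {M < |T|} carries mass → 1
    have hc : Tendsto c atTop atBot := by
      have h1 : Tendsto (fun n : ℕ => Real.sqrt n * ρP) atTop atBot :=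
        hsqrt.atTop_mul_const_of_neg hneg
      exact h1.atBot_div_const hσ'
    have hMc : Tendsto (fun n => -(2 * M) - c n) atTop atTop := by
      have h1 : Tendsto (fun n => -c n) atTop atTop :=
        tendsto_neg_atBot_atTop.comp hc
      have h2 := tendsto_atTop_add_const_left atTop (-(2 * M)) h1
      simpa [sub_eq_add_neg] using h2
    have hΦn : Tendsto (fun n => stdGaussianCDF (-(2 * M) - c n)) atTop (nhds 1) :=
      hΦ1.comp hMc
    have hbound : ∀ n : ℕ, stdGaussianCDF (-(2 * M) - c n) - e n ≤
        ((μ n) {sw | M < |T n sw|}).toReal := by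
      intro n
      have hsub : {sw | T n sw ≤ -(2 * M)} ⊆ {sw | M < |T n sw|} := by
        intro sw hsw
        simp only [Set.mem_setOf_eq] at hsw ⊢
        have h1 : 2 * M ≤ -(T n sw) := by linarith
        have h2 : -(T n sw) ≤ |T n sw| := neg_le_abs _
        linarith
      have hset : {sw | T n sw ≤ -(2 * M)} =
          {sw | T n sw - c n ≤ -(2 * M) - c n} := by
        ext sw; simp [sub_le_sub_iff_right]
      have hk := hkey n (-(2 * M) - c n)
      rw [← hset] at hk
      have hk1 := (abs_sub_le_iff.mp hk).2
      have hmono : ((μ n) {sw | T n sw ≤ -(2 * M)}).toReal ≤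
          ((μ n) {sw | M < |T n sw|}).toReal :=
        ENNReal.toReal_mono (by haveI := hprob n; exact measure_ne_top _ _)
          (measure_mono hsub)
      linarith
    have hlow : Tendsto (fun n => stdGaussianCDF (-(2 * M) - c n) - e n) atTop (nhds 1) := by
      simpa using hΦn.sub he0
    exact tendsto_of_tendsto_of_tendsto_of_le_of_le hlow tendsto_const_nhds
      hbound (fun n => htr1 n _)
  · -- 0 < ρP : c n → ∞, and μ{T ≤ M} → 0
    have hc : Tendsto c atTop atTop := by
      have h1 : Tendsto (fun n : ℕ => Real.sqrt n * ρP) atTop atTop :=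
        hsqrt.atTop_mul_const hpos
      exact h1.atTop_div_const hσ'
    have hMc : Tendsto (fun n => M - c n) atTop atBot := by
      have h1 : Tendsto (fun n => -c n) atTop atBot :=
        tendsto_neg_atTop_atBot.comp hc
      have h2 := tendsto_atBot_add_const_left atTop M h1
      simpa [sub_eq_add_neg] using h2
    have hΦn : Tendsto (fun n => stdGaussianCDF (M - c n)) atTop (nhds 0) :=
      hΦ0.comp hMc
    have hbound : ∀ n : ℕ, 1 - (stdGaussianCDF (M - c n) + e n) ≤
        ((μ n) {sw | M < |T n sw|}).toReal := by
      intro n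
      haveI := hprob n
      have hsub : {sw | T n sw ≤ M}ᶜ ⊆ {sw | M < |T n sw|} := by
        intro sw hsw
        simp only [Set.mem_compl_iff, Set.mem_setOf_eq, not_le] at hsw ⊢
        exact lt_of_lt_of_le hsw (le_abs_self _)
      have h1 : (1 : ENNReal) ≤ (μ n) {sw | T n sw ≤ M} + (μ n) {sw | T n sw ≤ M}ᶜ := by
        have h := measure_union_le (μ := μ n) {sw | T n sw ≤ M} {sw | T n sw ≤ M}ᶜ
        rwa [Set.union_compl_self, measure_univ] at h
      have h1' : (1 : ℝ) ≤ ((μ n) {sw | T n sw ≤ M}).toReal +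
          ((μ n) {sw | T n sw ≤ M}ᶜ).toReal := by
        have h2 := ENNReal.toReal_mono
          (ENNReal.add_ne_top.mpr ⟨measure_ne_top _ _, measure_ne_top _ _⟩) h1
        rwa [ENNReal.toReal_add (measure_ne_top _ _) (measure_ne_top _ _),
          ENNReal.toReal_one] at h2
      have h2' : ((μ n) {sw | T n sw ≤ M}ᶜ).toReal ≤
          ((μ n) {sw | M < |T n sw|}).toReal :=
        ENNReal.toReal_mono (measure_ne_top _ _) (measure_mono hsub)
      have hset : {sw | T n sw ≤ M} = {sw | T n sw - c n ≤ M - c n} := by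
        ext sw; simp [sub_le_sub_iff_right]
      have hk := hkey n (M - c n)
      rw [← hset] at hk
      have hk1 := (abs_sub_le_iff.mp hk).1
      linarith
    have hlow : Tendsto (fun n => 1 - (stdGaussianCDF (M - c n) + e n)) atTop (nhds 1) := by
      have h1 : Tendsto (fun n => stdGaussianCDF (M - c n) + e n) atTop (nhds 0) := by
        simpa using hΦn.add he0
      simpa using (tendsto_const_nhds : Tendsto (fun _ : ℕ => (1:ℝ)) atTop (nhds 1)).sub h1
    exact tendsto_of_tendsto_of_tendsto_of_le_of_le hlow tendsto_const_nhds
      hbound (fun n => htr1 n _)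
end

section
/- Let ε > 0 and B ≥ 1, and let s = (s_1,…,s_B) and s' = (s'_1,…,s'_B) be real score vectors with |s_i − s'_i| ≤ 1 for all i ∈ [B]. Let Z_1,…,Z_B be i.i.d. exponential random variables with density (ε/2)·exp(−εz/2) on z ≥ 0 (i.e., scale 2/ε). Then for every i ∈ [B], Pr[ s_i + Z_i > s_j + Z_j for all j ≠ i ] ≤ exp(ε) · Pr[ s'_i + Z_i > s'_j + Z_j for all j ≠ i ]. -/
open MeasureTheory ProbabilityTheory Real Set in
private lemma exp_shift_le_aux (ε : ℝ) (hε : 0 < ε) {T : Set ℝ} (hT : MeasurableSet T) :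
    expMeasure (ε / 2) ((fun x => x + 2) ⁻¹' T) ≤
      ENNReal.ofReal (Real.exp ε) * expMeasure (ε / 2) T := by
  set r := ε / 2 with hr'
  have hr : 0 < r := by positivity
  have hexp : expMeasure r ((fun x => x + 2) ⁻¹' T) =
      ∫⁻ x, ((fun x => x + 2) ⁻¹' T).indicator (exponentialPDF r) x := by
    rw [expMeasure, gammaMeasure, withDensity_apply _ (hT.preimage (measurable_add_const 2)),
      ← lintegral_indicator (hT.preimage (measurable_add_const 2)) _]
    rfl
  have hpdf : ∀ y, exponentialPDF r (y - 2) ≤ ENNReal.ofReal (rexp ε) * exponentialPDF r y := by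
    intro y
    rcases lt_or_ge y 2 with h | h
    · rw [exponentialPDF_of_neg (by linarith)]; exact zero_le
    · rw [exponentialPDF_of_nonneg (by linarith), exponentialPDF_of_nonneg (by linarith),
        ← ENNReal.ofReal_mul (exp_nonneg _)]
      apply ENNReal.ofReal_le_ofReal
      have : -(r * (y - 2)) = ε + -(r * y) := by rw [hr']; ring
      rw [this, exp_add]; ring_nf; exact le_refl _
  calc expMeasure r ((fun x => x + 2) ⁻¹' T)
      = ∫⁻ x, ((fun x => x + 2) ⁻¹' T).indicator (exponentialPDF r) x := hexp
    _ = ∫⁻ x, T.indicator (fun y => exponentialPDF r (y - 2)) (x + 2) := by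
        congr 1 with x
        by_cases hx : x + 2 ∈ T <;> simp [Set.indicator, hx]
    _ = ∫⁻ y, T.indicator (fun y => exponentialPDF r (y - 2)) y :=
        lintegral_add_right_eq_self _ 2
    _ ≤ ∫⁻ y, T.indicator (fun y => ENNReal.ofReal (rexp ε) * exponentialPDF r y) y := by
        apply lintegral_mono
        intro y
        exact Set.indicator_le_indicator' (fun _ => hpdf y)
    _ = ENNReal.ofReal (rexp ε) * expMeasure r T := by
        rw [expMeasure, gammaMeasure, withDensity_apply _ hT, ← lintegral_indicator hT _,
          ← lintegral_const_mul' _ _ ENNReal.ofReal_ne_top]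
        congr 1 with y
        by_cases hy : y ∈ T <;> simp [Set.indicator, hy] <;> rfl


open MeasureTheory

/-- **Report Noisy Max is ε-differentially private.**
Let `s, s'` be score vectors of length `B` with `|s_i − s'_i| ≤ 1` for all `i`, and let
`Z_1,…,Z_B` be i.i.d. exponential with density `(ε/2) exp(−εz/2)` on `z ≥ 0` (scale `2/ε`).
Then for every index `i`,
`Pr[∀ j ≠ i, s_i + Z_i > s_j + Z_j] ≤ exp(ε) · Pr[∀ j ≠ i, s'_i + Z_i > s'_j + Z_j]`. -/
theorem report_noisy_max_dp
    (ε : ℝ) (hε : 0 < ε) (B : ℕ) (hB : 1 ≤ B)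
    (s s' : Fin B → ℝ) (hsens : ∀ i, |s i - s' i| ≤ 1)
    (ν : Measure ℝ) [IsProbabilityMeasure ν]
    (hν : ν = ProbabilityTheory.expMeasure (ε / 2)) :
    ∀ i : Fin B,
      (Measure.pi fun _ : Fin B => ν) {Z | ∀ j, j ≠ i → s j + Z j < s i + Z i} ≤
        ENNReal.ofReal (Real.exp ε) *
          (Measure.pi fun _ : Fin B => ν) {Z | ∀ j, j ≠ i → s' j + Z j < s' i + Z i} := by
  obtain ⟨n, rfl⟩ : ∃ n, B = n + 1 := ⟨B - 1, by omega⟩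
  intro i
  -- measurability of the events
  have hA : ∀ t : Fin (n + 1) → ℝ,
      MeasurableSet {Z : Fin (n + 1) → ℝ | ∀ j, j ≠ i → t j + Z j < t i + Z i} := by
    intro t
    have : {Z : Fin (n + 1) → ℝ | ∀ j, j ≠ i → t j + Z j < t i + Z i} =
        ⋂ j, ⋂ _h : j ≠ i, {Z | t j + Z j < t i + Z i} := by ext Z; simp
    rw [this]
    exact MeasurableSet.iInter fun j => MeasurableSet.iInter fun _ =>
      measurableSet_lt (by fun_prop) (by fun_prop)
  -- measurability of the sections
  have hSec : ∀ (t : Fin (n + 1) → ℝ) (w : Fin n → ℝ),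
      MeasurableSet {x : ℝ | ∀ j, j ≠ i → t j + Fin.insertNth (α := fun _ => ℝ) i x w j < t i + x} := by
    intro t w
    have : {x : ℝ | ∀ j, j ≠ i → t j + Fin.insertNth (α := fun _ => ℝ) i x w j < t i + x} =
        ⋂ j, ⋂ _h : j ≠ i, {x | t j + Fin.insertNth (α := fun _ => ℝ) i x w j < t i + x} := by ext x; simp
    rw [this]
    refine MeasurableSet.iInter fun j => MeasurableSet.iInter fun hj => ?_
    obtain ⟨k, rfl⟩ := Fin.exists_succAbove_eq hj
    simp only [Fin.insertNth_apply_succAbove]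
    exact measurableSet_lt (by fun_prop) (by fun_prop)
  set π := Measure.pi fun _ : Fin n => ν with hπ
  have hmp := measurePreserving_piFinSuccAbove (fun _ : Fin (n + 1) => ν) i
  set e := MeasurableEquiv.piFinSuccAbove (fun _ : Fin (n + 1) => ℝ) i with he
  -- the key decomposition
  have key : ∀ t : Fin (n + 1) → ℝ,
      (Measure.pi fun _ : Fin (n + 1) => ν) {Z | ∀ j, j ≠ i → t j + Z j < t i + Z i} =
        ∫⁻ w, ν {x : ℝ | ∀ j, j ≠ i → t j + Fin.insertNth (α := fun _ => ℝ) i x w j < t i + x} ∂π := by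
    intro t
    have h1 : (Measure.pi fun _ : Fin (n + 1) => ν)
        {Z | ∀ j, j ≠ i → t j + Z j < t i + Z i} =
        (ν.prod π) (e.symm ⁻¹' {Z | ∀ j, j ≠ i → t j + Z j < t i + Z i}) := by
      rw [← hmp.map_eq, Measure.map_apply e.measurable ((hA t).preimage e.symm.measurable)]
      congr 1
      ext Z
      simp
    rw [h1, Measure.prod_apply_symm ((hA t).preimage e.symm.measurable)]
    congr 1 with w
    congr 1 with x
    simp only [Set.mem_preimage, Set.mem_setOf_eq, he,
      MeasurableEquiv.piFinSuccAbove_symm_apply, Fin.insertNthEquiv_apply,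
      Fin.insertNth_apply_same]
  -- pointwise comparison of the sections
  have hcomp : ∀ w : Fin n → ℝ,
      {x : ℝ | ∀ j, j ≠ i → s j + Fin.insertNth (α := fun _ => ℝ) i x w j < s i + x} ⊆
        (fun x => x + 2) ⁻¹' {x : ℝ | ∀ j, j ≠ i → s' j + Fin.insertNth (α := fun _ => ℝ) i x w j < s' i + x} := by
    intro w x hx j hj
    obtain ⟨k, rfl⟩ := Fin.exists_succAbove_eq hj
    have h1 := hx _ hj
    rw [Fin.insertNth_apply_succAbove] at h1 ⊢
    have h2 := abs_le.mp (hsens (i.succAbove k))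
    have h3 := abs_le.mp (hsens i)
    dsimp only
    linarith [h2.1, h2.2, h3.1, h3.2]
  subst hν
  calc (Measure.pi fun _ : Fin (n + 1) => ProbabilityTheory.expMeasure (ε / 2))
        {Z | ∀ j, j ≠ i → s j + Z j < s i + Z i}
      = ∫⁻ w, ProbabilityTheory.expMeasure (ε / 2)
          {x : ℝ | ∀ j, j ≠ i → s j + Fin.insertNth (α := fun _ => ℝ) i x w j < s i + x} ∂π := key s
    _ ≤ ∫⁻ w, ENNReal.ofReal (Real.exp ε) * ProbabilityTheory.expMeasure (ε / 2)
          {x : ℝ | ∀ j, j ≠ i → s' j + Fin.insertNth (α := fun _ => ℝ) i x w j < s' i + x} ∂π := by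
        refine lintegral_mono fun w => ?_
        exact le_trans (measure_mono (hcomp w)) (exp_shift_le_aux ε hε (hSec s' w))
    _ = ENNReal.ofReal (Real.exp ε) * ∫⁻ w, ProbabilityTheory.expMeasure (ε / 2)
          {x : ℝ | ∀ j, j ≠ i → s' j + Fin.insertNth (α := fun _ => ℝ) i x w j < s' i + x} ∂π :=
        lintegral_const_mul' _ _ ENNReal.ofReal_ne_top
    _ = ENNReal.ofReal (Real.exp ε) *
          (Measure.pi fun _ : Fin (n + 1) => ProbabilityTheory.expMeasure (ε / 2))
            {Z | ∀ j, j ≠ i → s' j + Z j < s' i + Z i} := by rw [key s']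
end

section
/- Let T_0, T_1, …, T_m be real numbers, let Q_0 ≥ Q_1 ≥ … ≥ Q_m be their decreasing sort, let c* = #{ j ∈ {1,…,m} : T_j ≥ T_0 } be the rank of T_0, and for γ ≥ 0 let G_γ = #{ j ∈ {1,…,m} : |T_j − T_0| ≤ γ }. Then every rank c ∈ {0,…,m} satisfying |Q_c − T_0| ≤ γ obeys |c − c*| ≤ G_γ. -/
/-- **Ranks with close values approximate the true rank.**
Let `T_0,…,T_m` be reals with decreasing sort `Q` (an antitone rearrangement),
let `c* = #{j ∈ {1,…,m} : T_j ≥ T_0}` be the rank of `T_0`, and for `γ ≥ 0` let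
`G_γ = #{j ∈ {1,…,m} : |T_j − T_0| ≤ γ}`. Then every rank `c ∈ {0,…,m}` with
`|Q_c − T_0| ≤ γ` satisfies `|c − c*| ≤ G_γ`. -/
theorem close_rank_of_close_value
    {m : ℕ} (γ : ℝ) (hγ : 0 ≤ γ)
    (T Q : Fin (m + 1) → ℝ)
    (hQanti : Antitone Q) (hQperm : ∃ σ : Equiv.Perm (Fin (m + 1)), Q = T ∘ σ) :
    ∀ c : Fin (m + 1), |Q c - T 0| ≤ γ →
      |(c : ℤ) - ((Finset.univ.filter (fun j : Fin (m + 1) => j ≠ 0 ∧ T 0 ≤ T j)).card : ℤ)| ≤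
        ((Finset.univ.filter (fun j : Fin (m + 1) => j ≠ 0 ∧ |T j - T 0| ≤ γ)).card : ℤ) := by
  obtain ⟨σ, hσ⟩ := hQperm
  intro c hc
  obtain ⟨hc1, hc2⟩ := abs_le.mp hc
  set cstar := (Finset.univ.filter (fun j : Fin (m + 1) => j ≠ 0 ∧ T 0 ≤ T j)).card with hcstar
  set G := (Finset.univ.filter (fun j : Fin (m + 1) => j ≠ 0 ∧ |T j - T 0| ≤ γ)).card with hG
  -- counting a predicate over Q equals counting it over T
  have perm_count : ∀ (p : ℝ → Prop) [DecidablePred p],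
      (Finset.univ.filter (fun i : Fin (m+1) => p (Q i))).card
        = (Finset.univ.filter (fun j : Fin (m+1) => p (T j))).card := by
    intro p _
    apply Finset.card_bij (fun i _ => σ i)
    · intro a ha
      simp only [Finset.mem_filter, Finset.mem_univ, true_and] at *
      simpa [hσ] using ha
    · intro a _ b _ h
      exact σ.injective h
    · intro b hb
      refine ⟨σ.symm b, ?_, by simp⟩
      simp only [Finset.mem_filter, Finset.mem_univ, true_and] at *
      simpa [hσ] using hb
  -- the erase-0 trick
  have erase_le : ∀ (p : ℝ → Prop) [DecidablePred p], (∀ x, p x → |x - T 0| ≤ γ) →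
      (Finset.univ.filter (fun j : Fin (m+1) => p (T j))).card ≤ G + 1 := by
    intro p _ hp
    set S := Finset.univ.filter (fun j : Fin (m+1) => p (T j)) with hS
    have h1 : S ⊆ insert 0 (S.erase 0) := Finset.subset_insert_iff.mpr (le_refl _)
    have h2 : S.erase 0 ⊆ Finset.univ.filter (fun j : Fin (m + 1) => j ≠ 0 ∧ |T j - T 0| ≤ γ) := by
      intro j hj
      obtain ⟨hj0, hjS⟩ := Finset.mem_erase.mp hj
      simp only [Finset.mem_filter, Finset.mem_univ, true_and, hS] at hjS ⊢
      exact ⟨hj0, hp _ hjS⟩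
    calc S.card ≤ (insert 0 (S.erase 0)).card := Finset.card_le_card h1
      _ ≤ (S.erase 0).card + 1 := Finset.card_insert_le _ _
      _ ≤ G + 1 := by exact Nat.add_le_add_right (Finset.card_le_card h2) 1
  -- first inequality: c ≤ cstar + G
  have ineq1 : (c : ℕ) + 1 ≤ (cstar + 1) + G := by
    have hsub : Finset.Iic c ⊆ Finset.univ.filter (fun i : Fin (m+1) => T 0 - γ ≤ Q i) := by
      intro i hi
      have : Q c ≤ Q i := hQanti (Finset.mem_Iic.mp hi)
      simp only [Finset.mem_filter, Finset.mem_univ, true_and]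
      linarith
    have hcard1 : (c : ℕ) + 1 ≤
        (Finset.univ.filter (fun i : Fin (m+1) => T 0 - γ ≤ Q i)).card := by
      calc (c : ℕ) + 1 = (Finset.Iic c).card := (Fin.card_Iic c).symm
        _ ≤ _ := Finset.card_le_card hsub
    rw [perm_count (fun x => T 0 - γ ≤ x)] at hcard1
    have hsplit : Finset.univ.filter (fun j : Fin (m+1) => T 0 - γ ≤ T j) ⊆
        (Finset.univ.filter (fun j : Fin (m+1) => T 0 ≤ T j)) ∪
        (Finset.univ.filter (fun j : Fin (m+1) => T 0 - γ ≤ T j ∧ T j < T 0)) := by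
      intro j hj
      simp only [Finset.mem_filter, Finset.mem_univ, true_and, Finset.mem_union] at hj ⊢
      by_cases h0 : T 0 ≤ T j
      · left; exact h0
      · right; exact ⟨hj, by linarith⟩
    have hge : (Finset.univ.filter (fun j : Fin (m+1) => T 0 ≤ T j)).card ≤ cstar + 1 := by
      set S := Finset.univ.filter (fun j : Fin (m+1) => T 0 ≤ T j) with hS
      have h1 : S ⊆ insert 0 (S.erase 0) := Finset.subset_insert_iff.mpr (le_refl _)
      have h2 : S.erase 0 ⊆ Finset.univ.filter (fun j : Fin (m + 1) => j ≠ 0 ∧ T 0 ≤ T j) := by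
        intro j hj
        obtain ⟨hj0, hjS⟩ := Finset.mem_erase.mp hj
        simp only [Finset.mem_filter, Finset.mem_univ, true_and, hS] at hjS ⊢
        exact ⟨hj0, hjS⟩
      calc S.card ≤ (insert 0 (S.erase 0)).card := Finset.card_le_card h1
        _ ≤ (S.erase 0).card + 1 := Finset.card_insert_le _ _
        _ ≤ cstar + 1 := Nat.add_le_add_right (Finset.card_le_card h2) 1
    have hsub2 : Finset.univ.filter (fun j : Fin (m+1) => T 0 - γ ≤ T j ∧ T j < T 0) ⊆
        Finset.univ.filter (fun j : Fin (m + 1) => j ≠ 0 ∧ |T j - T 0| ≤ γ) := by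
      intro j hj
      simp only [Finset.mem_filter, Finset.mem_univ, true_and] at hj ⊢
      refine ⟨fun h => by rw [h] at hj; exact absurd hj.2 (lt_irrefl _), abs_le.mpr ⟨by linarith [hj.1], by linarith [hj.2]⟩⟩
    calc (c : ℕ) + 1 ≤ _ := hcard1
      _ ≤ _ := Finset.card_le_card hsplit
      _ ≤ (Finset.univ.filter (fun j : Fin (m+1) => T 0 ≤ T j)).card
          + (Finset.univ.filter (fun j : Fin (m+1) => T 0 - γ ≤ T j ∧ T j < T 0)).card :=
          Finset.card_union_le _ _
      _ ≤ (cstar + 1) + G := Nat.add_le_add hge (Finset.card_le_card hsub2)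
  -- second inequality: cstar ≤ c + G
  have ineq2 : cstar + 1 ≤ (c : ℕ) + (G + 1) := by
    have h0notin : (0 : Fin (m+1)) ∉
        Finset.univ.filter (fun j : Fin (m + 1) => j ≠ 0 ∧ T 0 ≤ T j) := by
      simp
    have hins : insert (0 : Fin (m+1))
        (Finset.univ.filter (fun j : Fin (m + 1) => j ≠ 0 ∧ T 0 ≤ T j)) ⊆
        Finset.univ.filter (fun j : Fin (m+1) => T 0 ≤ T j) := by
      intro j hj
      rcases Finset.mem_insert.mp hj with h | h
      · subst h; simp
      · simp only [Finset.mem_filter, Finset.mem_univ, true_and] at h ⊢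
        exact h.2
    have hcard1 : cstar + 1 ≤ (Finset.univ.filter (fun j : Fin (m+1) => T 0 ≤ T j)).card := by
      calc cstar + 1 = (insert (0 : Fin (m+1))
            (Finset.univ.filter (fun j : Fin (m + 1) => j ≠ 0 ∧ T 0 ≤ T j))).card := by
            rw [Finset.card_insert_of_notMem h0notin]
        _ ≤ _ := Finset.card_le_card hins
    rw [← perm_count (fun x => T 0 ≤ x)] at hcard1
    have hsplit : Finset.univ.filter (fun i : Fin (m+1) => T 0 ≤ Q i) ⊆
        (Finset.univ.filter (fun i : Fin (m+1) => T 0 + γ < Q i)) ∪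
        (Finset.univ.filter (fun i : Fin (m+1) => T 0 ≤ Q i ∧ Q i ≤ T 0 + γ)) := by
      intro i hi
      simp only [Finset.mem_filter, Finset.mem_univ, true_and, Finset.mem_union] at hi ⊢
      by_cases h : T 0 + γ < Q i
      · left; exact h
      · right; exact ⟨hi, by linarith⟩
    have hIio : Finset.univ.filter (fun i : Fin (m+1) => T 0 + γ < Q i) ⊆ Finset.Iio c := by
      intro i hi
      simp only [Finset.mem_filter, Finset.mem_univ, true_and] at hi
      rw [Finset.mem_Iio]
      by_contra h
      have : Q i ≤ Q c := hQanti (not_lt.mp h)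
      linarith
    have hmid : (Finset.univ.filter (fun i : Fin (m+1) => T 0 ≤ Q i ∧ Q i ≤ T 0 + γ)).card
        ≤ G + 1 := by
      rw [perm_count (fun x => T 0 ≤ x ∧ x ≤ T 0 + γ)]
      exact erase_le (fun x => T 0 ≤ x ∧ x ≤ T 0 + γ) (fun x hx => abs_le.mpr ⟨by linarith [hx.1], by linarith [hx.2]⟩)
    calc cstar + 1 ≤ _ := hcard1
      _ ≤ _ := Finset.card_le_card hsplit
      _ ≤ (Finset.univ.filter (fun i : Fin (m+1) => T 0 + γ < Q i)).card
          + (Finset.univ.filter (fun i : Fin (m+1) => T 0 ≤ Q i ∧ Q i ≤ T 0 + γ)).card :=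
          Finset.card_union_le _ _
      _ ≤ (c : ℕ) + (G + 1) := by
          have := Finset.card_le_card hIio
          rw [Fin.card_Iio] at this
          omega
  rw [abs_le]
  constructor <;> [skip; skip] <;> push_cast <;> omega
end

section
/- Let ε > 0, Δ_T > 0, δ ∈ (0,1), m ≥ 1, and let T_0, T_1, …, T_m be real numbers with decreasing sort Q_0 ≥ … ≥ Q_m. Define scores s_c = −|Q_c − T_0|/(2Δ_T) for c ∈ {0,…,m}, let Z_0,…,Z_m be i.i.d. exponential random variables with density (ε/2)exp(−εz/2) on z ≥ 0, and let ĉ be an index maximizing s_c + Z_c. Let p̂ = (1+ĉ)/(m+1), let c* = #{ j ∈ {1,…,m} : T_j ≥ T_0 } with p* = (1+c*)/(m+1), and set γ = (4Δ_T/ε)·log(m/δ) and G_γ = #{ j ∈ {1,…,m} : |T_j − T_0| ≤ γ }. Then with probability at least 1 − δ over the noise, |p̂ − p*| ≤ G_γ/(m+1). -/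
open MeasureTheory Finset

lemma privCRT_count (m : ℕ) (T Q : Fin (m + 1) → ℝ) (hQanti : Antitone Q)
    (σ : Equiv.Perm (Fin (m + 1))) (hσ : Q = T ∘ σ) (γ : ℝ)
    (c : Fin (m + 1)) (hc : |Q c - T 0| ≤ γ) :
    (c : ℕ) ≤ (univ.filter (fun j : Fin (m + 1) => j ≠ 0 ∧ T 0 ≤ T j)).card
        + (univ.filter (fun j : Fin (m + 1) => j ≠ 0 ∧ |T j - T 0| ≤ γ)).card
      ∧ (univ.filter (fun j : Fin (m + 1) => j ≠ 0 ∧ T 0 ≤ T j)).card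
        ≤ (c : ℕ) + (univ.filter (fun j : Fin (m + 1) => j ≠ 0 ∧ |T j - T 0| ≤ γ)).card := by
  classical
  have hγ0 : 0 ≤ γ := le_trans (abs_nonneg _) hc
  have habs := abs_le.mp hc
  set cs := (univ.filter (fun j : Fin (m + 1) => j ≠ 0 ∧ T 0 ≤ T j)).card with hcs
  set G := (univ.filter (fun j : Fin (m + 1) => j ≠ 0 ∧ |T j - T 0| ≤ γ)).card with hG
  -- cardinalities are permutation invariant
  have key : ∀ p : ℝ → Prop, ∀ _ : DecidablePred p,
      (univ.filter fun i : Fin (m + 1) => p (Q i)).card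
        = (univ.filter fun j : Fin (m + 1) => p (T j)).card := by
    intro p hp
    refine Finset.card_bij (fun a _ => σ a) ?_ ?_ ?_
    · intro a ha
      simp only [mem_filter, mem_univ, true_and] at ha ⊢
      rw [hσ] at ha; exact ha
    · intro a _ b _ h; exact σ.injective h
    · intro b hb
      refine ⟨σ.symm b, ?_, by simp⟩
      simp only [mem_filter, mem_univ, true_and] at hb ⊢
      rw [hσ]; simpa using hb
  constructor
  · -- upper bound : c + 1 ≤ 1 + cs + G
    have hsub : Finset.Iic c ⊆ univ.filter (fun i => T 0 - γ ≤ Q i) := by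
      intro i hi
      simp only [Finset.mem_Iic] at hi
      simp only [mem_filter, mem_univ, true_and]
      have := hQanti hi
      linarith [habs.1]
    have h1 := Finset.card_le_card hsub
    rw [Fin.card_Iic] at h1
    have hkey1 : (univ.filter (fun i : Fin (m+1) => T 0 - γ ≤ Q i)).card
        = (univ.filter (fun j : Fin (m+1) => T 0 - γ ≤ T j)).card := key (fun x => T 0 - γ ≤ x) (fun _ => by infer_instance)
    rw [hkey1] at h1
    have hsub2 : univ.filter (fun j : Fin (m + 1) => T 0 - γ ≤ T j)
        ⊆ insert 0 ((univ.filter (fun j : Fin (m + 1) => j ≠ 0 ∧ T 0 ≤ T j))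
          ∪ (univ.filter (fun j : Fin (m + 1) => j ≠ 0 ∧ |T j - T 0| ≤ γ))) := by
      intro j hj
      simp only [mem_filter, mem_univ, true_and] at hj
      by_cases h0 : j = 0
      · simp [h0]
      · simp only [mem_insert, mem_union, mem_filter, mem_univ, true_and]
        by_cases hT : T 0 ≤ T j
        · exact Or.inr (Or.inl ⟨h0, hT⟩)
        · push_neg at hT
          exact Or.inr (Or.inr ⟨h0, by rw [abs_le]; constructor <;> linarith⟩)
    have h2 := Finset.card_le_card hsub2
    have h3 := Finset.card_insert_le (0 : Fin (m + 1))
      ((univ.filter (fun j : Fin (m + 1) => j ≠ 0 ∧ T 0 ≤ T j))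
        ∪ (univ.filter (fun j : Fin (m + 1) => j ≠ 0 ∧ |T j - T 0| ≤ γ)))
    have h4 := Finset.card_union_le
      (univ.filter (fun j : Fin (m + 1) => j ≠ 0 ∧ T 0 ≤ T j))
      (univ.filter (fun j : Fin (m + 1) => j ≠ 0 ∧ |T j - T 0| ≤ γ))
    omega
  · -- lower bound
    have hsub : Finset.Ici c ⊆ univ.filter (fun i => Q i ≤ T 0 + γ) := by
      intro i hi
      simp only [Finset.mem_Ici] at hi
      simp only [mem_filter, mem_univ, true_and]
      have := hQanti hi
      linarith [habs.2]
    have h1 := Finset.card_le_card hsub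
    rw [Fin.card_Ici] at h1
    have hkey1 : (univ.filter (fun i : Fin (m+1) => Q i ≤ T 0 + γ)).card
        = (univ.filter (fun j : Fin (m+1) => T j ≤ T 0 + γ)).card := key (fun x => x ≤ T 0 + γ) (fun _ => by infer_instance)
    rw [hkey1] at h1
    set cs' := (univ.filter (fun j : Fin (m + 1) => j ≠ 0 ∧ ¬ T 0 ≤ T j)).card with hcs'
    have hpart : cs + cs' = m := by
      have := Finset.card_filter_add_card_filter_not
        (s := univ.filter (fun j : Fin (m + 1) => j ≠ 0)) (p := fun j => T 0 ≤ T j)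
      rw [Finset.filter_filter, Finset.filter_filter] at this
      have hcount : (univ.filter (fun j : Fin (m + 1) => j ≠ 0)).card = m := by
        rw [Finset.filter_ne', Finset.card_erase_of_mem (mem_univ _)]
        simp
      rw [hcount] at this
      exact this
    have hsub2 : univ.filter (fun j : Fin (m + 1) => T j ≤ T 0 + γ)
        ⊆ insert 0 ((univ.filter (fun j : Fin (m + 1) => j ≠ 0 ∧ ¬ T 0 ≤ T j))
          ∪ (univ.filter (fun j : Fin (m + 1) => j ≠ 0 ∧ |T j - T 0| ≤ γ))) := by
      intro j hj
      simp only [mem_filter, mem_univ, true_and] at hj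
      by_cases h0 : j = 0
      · simp [h0]
      · simp only [mem_insert, mem_union, mem_filter, mem_univ, true_and]
        by_cases hT : T 0 ≤ T j
        · exact Or.inr (Or.inr ⟨h0, by rw [abs_le]; constructor <;> linarith⟩)
        · exact Or.inr (Or.inl ⟨h0, hT⟩)
    have h2 := Finset.card_le_card hsub2
    have h3 := Finset.card_insert_le (0 : Fin (m + 1))
      ((univ.filter (fun j : Fin (m + 1) => j ≠ 0 ∧ ¬ T 0 ≤ T j))
        ∪ (univ.filter (fun j : Fin (m + 1) => j ≠ 0 ∧ |T j - T 0| ≤ γ)))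
    have h4 := Finset.card_union_le
      (univ.filter (fun j : Fin (m + 1) => j ≠ 0 ∧ ¬ T 0 ≤ T j))
      (univ.filter (fun j : Fin (m + 1) => j ≠ 0 ∧ |T j - T 0| ≤ γ))
    have hcle : (c : ℕ) ≤ m := Nat.lt_succ_iff.mp c.isLt
    omega

open scoped ENNReal

-- single-coordinate cylinder measure under a product of probability measures
lemma pi_eval_measure {n : ℕ} (ν : Measure ℝ) [IsProbabilityMeasure ν]
    (c : Fin n) (A : Set ℝ) :
    (Measure.pi fun _ : Fin n => ν) (Function.eval c ⁻¹' A) = ν A := by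
  classical
  rw [Set.eval_preimage, Measure.pi_pi]
  have : ∀ i : Fin n, ν (Function.update (fun _ : Fin n => Set.univ) c A i)
      = if i = c then ν A else 1 := by
    intro i
    rw [Function.update_apply]
    split <;> simp
  rw [Finset.prod_congr rfl (fun i _ => this i), Finset.prod_ite_eq' univ c (fun _ => ν A)]
  simp

-- tail bound for the exponential measure
lemma expMeasure_Ioi (r t : ℝ) (hr : 0 < r) (ht : 0 ≤ t) :
    ProbabilityTheory.expMeasure r (Set.Ioi t) = ENNReal.ofReal (Real.exp (-(r * t))) := by
  have hprob : IsProbabilityMeasure (ProbabilityTheory.expMeasure r) :=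
    ProbabilityTheory.isProbabilityMeasure_expMeasure hr
  have hIic : (ProbabilityTheory.expMeasure r) (Set.Iic t)
      = ENNReal.ofReal (1 - Real.exp (-(r * t))) := by
    rw [← ProbabilityTheory.ofReal_cdf (μ := ProbabilityTheory.expMeasure r) t]
    have := ProbabilityTheory.cdf_expMeasure_eq hr t
    rw [this, if_pos ht]
  have : Set.Ioi t = (Set.Iic t)ᶜ := Set.compl_Iic.symm
  rw [this, prob_compl_eq_one_sub measurableSet_Iic, hIic]
  have hexp1 : Real.exp (-(r * t)) ≤ 1 := by
    rw [Real.exp_le_one_iff]; nlinarith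
  have hexp0 : (0:ℝ) ≤ Real.exp (-(r * t)) := (Real.exp_pos _).le
  rw [show (1 : ℝ≥0∞) = ENNReal.ofReal 1 by simp, ← ENNReal.ofReal_sub _ (by linarith)]
  norm_num

lemma expMeasure_Iio_zero (r : ℝ) (hr : 0 < r) :
    ProbabilityTheory.expMeasure r (Set.Iio 0) = 0 := by
  refine measure_mono_null Set.Iio_subset_Iic_self ?_
  have hprob : IsProbabilityMeasure (ProbabilityTheory.expMeasure r) :=
    ProbabilityTheory.isProbabilityMeasure_expMeasure hr
  rw [← ProbabilityTheory.ofReal_cdf (μ := ProbabilityTheory.expMeasure r) 0]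
  have := ProbabilityTheory.cdf_expMeasure_eq hr 0
  rw [this]
  simp

/-- **Accuracy of the private conditional randomization test (PrivCRT).**
Given statistics `T_0,…,T_m` with decreasing sort `Q`, scores
`s_c = −|Q_c − T_0|/(2Δ_T)`, i.i.d. exponential noise `Z_c` of density
`(ε/2)exp(−εz/2)` on `z ≥ 0`, a noisy-argmax rank `ĉ(Z)`, private p-value
`p̂ = (1+ĉ)/(m+1)`, true rank `c* = #{j ∈ [m] : T_j ≥ T_0}` with `p* = (1+c*)/(m+1)`,
`γ = (4Δ_T/ε)log(m/δ)` and `G_γ = #{j ∈ [m] : |T_j − T_0| ≤ γ}`, with probability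
at least `1 − δ` we have `|p̂ − p*| ≤ G_γ/(m+1)`. -/
theorem privCRT_accuracy
    (ε ΔT δ : ℝ) (hε : 0 < ε) (hΔT : 0 < ΔT) (hδ : δ ∈ Set.Ioo (0 : ℝ) 1)
    (m : ℕ) (hm : 1 ≤ m)
    (T Q : Fin (m + 1) → ℝ)
    (hQanti : Antitone Q) (hQperm : ∃ σ : Equiv.Perm (Fin (m + 1)), Q = T ∘ σ)
    (s : Fin (m + 1) → ℝ) (hs : s = fun c => -(|Q c - T 0| / (2 * ΔT)))
    (ν : Measure ℝ) [IsProbabilityMeasure ν]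
    (hν : ν = ProbabilityTheory.expMeasure (ε / 2))
    (chat : (Fin (m + 1) → ℝ) → Fin (m + 1))
    (hchat : ∀ Z : Fin (m + 1) → ℝ, ∀ c : Fin (m + 1), s c + Z c ≤ s (chat Z) + Z (chat Z))
    (γ : ℝ) (hγ : γ = 4 * ΔT / ε * Real.log (m / δ)) :
    ENNReal.ofReal (1 - δ) ≤
      (Measure.pi fun _ : Fin (m + 1) => ν)
        {Z | |((1 + (chat Z : ℕ) : ℝ) / (m + 1)) -
              ((1 + ((Finset.univ.filter
                  (fun j : Fin (m + 1) => j ≠ 0 ∧ T 0 ≤ T j)).card : ℕ) : ℝ) / (m + 1))| ≤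
            ((Finset.univ.filter
                (fun j : Fin (m + 1) => j ≠ 0 ∧ |T j - T 0| ≤ γ)).card : ℝ) / (m + 1)} := by
  classical
  obtain ⟨σ, hσ⟩ := hQperm
  obtain ⟨hδ0, hδ1⟩ := hδ
  set μ := (Measure.pi fun _ : Fin (m + 1) => ν) with hμ
  set c0 : Fin (m + 1) := σ.symm 0 with hc0
  have hQc0 : Q c0 = T 0 := by rw [hσ]; simp [hc0]
  set t : ℝ := 2 / ε * Real.log ((m : ℝ) / δ) with htdef
  have hmpos : (0:ℝ) < m := by exact_mod_cast hm
  have hlog0 : 0 ≤ Real.log ((m : ℝ) / δ) := by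
    apply Real.log_nonneg
    rw [le_div_iff₀ hδ0]
    have hm1 : (1:ℝ) ≤ (m:ℝ) := by exact_mod_cast hm
    nlinarith
  have ht0 : 0 ≤ t := by positivity
  have hγt : γ = 2 * ΔT * t := by rw [hγ, htdef]; field_simp; ring
  have hγ0 : 0 ≤ γ := by rw [hγt]; positivity
  set E : Set (Fin (m + 1) → ℝ) := {Z | 0 ≤ Z c0 ∧ ∀ c, c ≠ c0 → Z c ≤ t} with hE
  -- measurability of E
  have hEmeas : MeasurableSet E := by
    have : E = (Function.eval c0 ⁻¹' Set.Ici 0) ∩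
        ⋂ c : Fin (m + 1), {Z : Fin (m + 1) → ℝ | c ≠ c0 → Z c ≤ t} := by
      ext Z; simp [hE, Set.mem_iInter, Function.eval]
    rw [this]
    refine MeasurableSet.inter ((measurable_pi_apply c0) measurableSet_Ici) ?_
    refine MeasurableSet.iInter fun c => ?_
    by_cases hcc : c = c0
    · simp [hcc]
    · have : {Z : Fin (m + 1) → ℝ | c ≠ c0 → Z c ≤ t}
          = Function.eval c ⁻¹' Set.Iic t := by
        ext Z; simp [hcc, Function.eval]
      rw [this]
      exact (measurable_pi_apply c) measurableSet_Iic
  -- complement bound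
  have hcompl : μ Eᶜ ≤ ENNReal.ofReal δ := by
    have hsub : Eᶜ ⊆ (Function.eval c0 ⁻¹' Set.Iio 0) ∪
        ⋃ c ∈ univ.erase c0, (Function.eval c ⁻¹' Set.Ioi t) := by
      intro Z hZ
      simp only [hE, Set.mem_compl_iff, Set.mem_setOf_eq, not_and, not_forall, not_le] at hZ
      by_cases h0 : 0 ≤ Z c0
      · obtain ⟨c, hc, hct⟩ := hZ h0
        exact Or.inr (Set.mem_biUnion (Finset.mem_erase.mpr ⟨hc, mem_univ _⟩) hct)
      · exact Or.inl (by simpa using lt_of_not_ge h0)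
    calc μ Eᶜ ≤ μ (Function.eval c0 ⁻¹' Set.Iio 0) +
          μ (⋃ c ∈ univ.erase c0, (Function.eval c ⁻¹' Set.Ioi t)) :=
        le_trans (measure_mono hsub) (measure_union_le _ _)
      _ ≤ 0 + ∑ c ∈ univ.erase c0, μ (Function.eval c ⁻¹' Set.Ioi t) := by
          refine add_le_add ?_ (measure_biUnion_finset_le _ _)
          rw [hμ, pi_eval_measure, hν, expMeasure_Iio_zero _ (by positivity)]
      _ = ∑ c ∈ univ.erase c0, ENNReal.ofReal (δ / m) := by
          rw [zero_add]
          refine Finset.sum_congr rfl fun c _ => ?_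
          rw [hμ, pi_eval_measure, hν, expMeasure_Ioi _ _ (by positivity) ht0]
          congr 1
          have : ε / 2 * t = Real.log ((m : ℝ) / δ) := by
            rw [htdef]; field_simp
          rw [this, Real.exp_neg, Real.exp_log (by positivity)]
          rw [inv_div]
      _ ≤ ENNReal.ofReal δ := by
          rw [Finset.sum_const, Finset.card_erase_of_mem (mem_univ _), card_univ]
          simp only [Fintype.card_fin, Nat.add_sub_cancel, nsmul_eq_mul]
          rw [show ((m : ℝ≥0∞)) = ENNReal.ofReal m by simp,
            ← ENNReal.ofReal_mul (by positivity)]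
          rw [mul_div_cancel₀ _ (ne_of_gt hmpos)]
  -- E is contained in the target event
  have hdet : E ⊆ {Z | |((1 + (chat Z : ℕ) : ℝ) / (m + 1)) -
              ((1 + ((Finset.univ.filter
                  (fun j : Fin (m + 1) => j ≠ 0 ∧ T 0 ≤ T j)).card : ℕ) : ℝ) / (m + 1))| ≤
            ((Finset.univ.filter
                (fun j : Fin (m + 1) => j ≠ 0 ∧ |T j - T 0| ≤ γ)).card : ℝ) / (m + 1)} := by
    intro Z hZ
    obtain ⟨hZ0, hZt⟩ := hZ
    -- show |Q (chat Z) - T 0| ≤ γ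
    have hkey : |Q (chat Z) - T 0| ≤ γ := by
      by_cases hcc : chat Z = c0
      · rw [hcc, hQc0]; simpa using hγ0
      · have h := hchat Z c0
        rw [hs] at h
        simp only [hQc0, sub_self, abs_zero, zero_div, neg_zero, zero_add] at h
        have h2 : Z (chat Z) ≤ t := hZt _ hcc
        have h3 : -(|Q (chat Z) - T 0| / (2 * ΔT)) ≥ -t := by linarith
        have h4 : |Q (chat Z) - T 0| / (2 * ΔT) ≤ t := by linarith
        rw [div_le_iff₀ (by positivity)] at h4
        rw [hγt]; linarith
    have hcount := privCRT_count m T Q hQanti σ hσ γ (chat Z) hkey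
    set cs := (univ.filter (fun j : Fin (m + 1) => j ≠ 0 ∧ T 0 ≤ T j)).card
    set G := (univ.filter (fun j : Fin (m + 1) => j ≠ 0 ∧ |T j - T 0| ≤ γ)).card
    simp only [Set.mem_setOf_eq]
    have h1 : ((chat Z : ℕ) : ℝ) ≤ cs + G := by exact_mod_cast hcount.1
    have h2 : ((cs : ℕ) : ℝ) ≤ (chat Z : ℕ) + G := by exact_mod_cast hcount.2
    have hm1 : (0:ℝ) < (m : ℝ) + 1 := by positivity
    rw [div_sub_div_same, abs_div, abs_of_pos hm1]
    rw [div_le_div_iff_of_pos_right hm1]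
    rw [abs_le]
    constructor <;> linarith
  calc ENNReal.ofReal (1 - δ) ≤ 1 - ENNReal.ofReal δ := by
        rw [show (1:ℝ≥0∞) = ENNReal.ofReal 1 by simp, ← ENNReal.ofReal_sub _ (le_of_lt hδ0)]
      _ ≤ 1 - μ Eᶜ := by
        exact tsub_le_tsub_left hcompl 1
      _ = μ E := by
        rw [prob_compl_eq_one_sub hEmeas,
          ENNReal.sub_sub_cancel ENNReal.one_ne_top prob_le_one]
      _ ≤ _ := measure_mono hdet
end

section
/- Let ε > 0, Δ > 0, k ≥ 1, and let x, x' ∈ ℝ^k with ‖x − x'‖_1 ≤ Δ. Let W = (W_1,…,W_k) have i.i.d. coordinates distributed as Lap(0, Δ/ε), i.e., with density (ε/(2Δ))·exp(−ε|w|/Δ) on ℝ. Then for every Borel set S ⊆ ℝ^k, Pr[x + W ∈ S] ≤ exp(ε) · Pr[x' + W ∈ S]. -/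
open MeasureTheory

private lemma lintegral_pi_fin_prod :
    ∀ (n : ℕ) (f : Fin n → ℝ → ENNReal), (∀ i, Measurable (f i)) →
    ∫⁻ w, ∏ i, f i (w i) ∂(Measure.pi fun _ : Fin n => (volume : Measure ℝ)) =
      ∏ i, ∫⁻ t, f i t := by
  intro n
  induction n with
  | zero =>
      intro f _
      simp [Measure.pi_of_empty, lintegral_dirac]
  | succ n ih =>
      intro f hf
      have hmp :=
        (measurePreserving_piFinSuccAbove (fun _ : Fin (n + 1) => (volume : Measure ℝ)) 0).symm
      have hFm : Measurable (fun w : Fin (n + 1) → ℝ => ∏ i, f i (w i)) :=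
        Finset.measurable_prod _ fun i _ => (hf i).comp (measurable_pi_apply i)
      rw [← hmp.lintegral_comp hFm]
      simp_rw [MeasurableEquiv.piFinSuccAbove_symm_apply, Fin.insertNthEquiv,
        Fin.prod_univ_succ, Fin.insertNth_zero]
      simp only [Fin.zero_succAbove, cast_eq, Fin.cons_zero, Fin.cons_succ, Equiv.coe_fn_mk]
      have hgm : Measurable (fun y : Fin n → ℝ => ∏ j, f j.succ (y j)) :=
        Finset.measurable_prod _ fun j _ => (hf j.succ).comp (measurable_pi_apply j)
      rw [lintegral_prod_mul (hf 0).aemeasurable hgm.aemeasurable,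
        ih (fun j => f j.succ) (fun j => hf j.succ)]

private lemma pi_withDensity_eq (k : ℕ) (g : ℝ → ENNReal) (hg : Measurable g)
    [SigmaFinite (volume.withDensity g)] :
    Measure.pi (fun _ : Fin k => volume.withDensity g) =
      (Measure.pi fun _ : Fin k => (volume : Measure ℝ)).withDensity
        (fun w => ∏ i, g (w i)) := by
  refine Measure.pi_eq fun s hs => ?_
  rw [withDensity_apply _ (MeasurableSet.univ_pi hs),
    ← lintegral_indicator (MeasurableSet.univ_pi hs)]
  have hind : ∀ w : Fin k → ℝ,
      (Set.univ.pi s).indicator (fun w => ∏ i, g (w i)) w = ∏ i, (s i).indicator g (w i) := by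
    intro w
    by_cases hw : w ∈ Set.univ.pi s
    · rw [Set.indicator_of_mem hw]
      exact Finset.prod_congr rfl fun i _ =>
        (Set.indicator_of_mem (hw i (Set.mem_univ i)) g).symm
    · rw [Set.indicator_of_notMem hw]
      rw [Set.mem_univ_pi] at hw
      push_neg at hw
      obtain ⟨i, hi⟩ := hw
      exact (Finset.prod_eq_zero (Finset.mem_univ i) (Set.indicator_of_notMem hi g)).symm
  simp_rw [hind]
  rw [lintegral_pi_fin_prod k _ (fun i => hg.indicator (hs i))]
  exact Finset.prod_congr rfl fun i _ => by
    rw [lintegral_indicator (hs i), withDensity_apply _ (hs i)]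

/-- **The Laplace mechanism is ε-differentially private.**
If `x, x' ∈ ℝ^k` satisfy `‖x − x'‖₁ ≤ Δ` and `W` has i.i.d. `Lap(0, Δ/ε)`
coordinates, then for every Borel set `S ⊆ ℝ^k`,
`Pr[x + W ∈ S] ≤ exp(ε) · Pr[x' + W ∈ S]`. -/
theorem laplace_mechanism_dp
    (ε Δ : ℝ) (hε : 0 < ε) (hΔ : 0 < Δ)
    (k : ℕ) (hk : 1 ≤ k)
    (x x' : Fin k → ℝ) (hsens : ∑ i, |x i - x' i| ≤ Δ)
    (ν : Measure ℝ) [IsProbabilityMeasure ν]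
    (hν : ν = volume.withDensity
      (fun w => ENNReal.ofReal ((2 * (Δ / ε))⁻¹ * Real.exp (-|w| / (Δ / ε))))) :
    ∀ S : Set (Fin k → ℝ), MeasurableSet S →
      (Measure.pi fun _ : Fin k => ν) {W | (fun i => x i + W i) ∈ S} ≤
        ENNReal.ofReal (Real.exp ε) *
          (Measure.pi fun _ : Fin k => ν) {W | (fun i => x' i + W i) ∈ S} := by
  intro S hS
  set σ : ℝ := Δ / ε with hσdef
  have hσ : 0 < σ := div_pos hΔ hε
  set g : ℝ → ENNReal := fun w => ENNReal.ofReal ((2 * σ)⁻¹ * Real.exp (-|w| / σ)) with hgdef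
  have hgm : Measurable g := by
    apply ENNReal.measurable_ofReal.comp
    exact (measurable_const.mul ((measurable_norm.neg.div_const σ).exp))
  haveI hsf : SigmaFinite (volume.withDensity g) := by
    rw [show volume.withDensity g = ν from hν.symm]
    infer_instance
  -- key formula: the shifted measure as a Lebesgue integral
  have key : ∀ y : Fin k → ℝ,
      (Measure.pi fun _ : Fin k => ν) {W | (fun i => y i + W i) ∈ S} =
        ∫⁻ t, S.indicator (fun t => ∏ i, g (t i - y i)) t
          ∂(Measure.pi fun _ : Fin k => (volume : Measure ℝ)) := by
    intro y
    have hT : MeasurePreserving (fun W : Fin k → ℝ => fun i => y i + W i)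
        (Measure.pi fun _ => volume) (Measure.pi fun _ => volume) :=
      measurePreserving_pi _ _ (fun i => measurePreserving_add_left volume (y i))
    have hAm : MeasurableSet {W : Fin k → ℝ | (fun i => y i + W i) ∈ S} :=
      hT.measurable hS
    have hHm : Measurable fun t : Fin k → ℝ => ∏ i, g (t i - y i) :=
      Finset.measurable_prod _ fun i _ =>
        hgm.comp ((measurable_pi_apply i).sub measurable_const)
    rw [hν, pi_withDensity_eq k g hgm, withDensity_apply _ hAm, ← lintegral_indicator hAm]
    have hind : ∀ w : Fin k → ℝ,
        ({W : Fin k → ℝ | (fun i => y i + W i) ∈ S}).indicator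
            (fun w => ∏ i, g (w i)) w =
          S.indicator (fun t => ∏ i, g (t i - y i)) (fun i => y i + w i) := by
      intro w
      by_cases hw : (fun i => y i + w i) ∈ S
      · rw [Set.indicator_of_mem
            (show w ∈ {W : Fin k → ℝ | (fun i => y i + W i) ∈ S} from hw),
          Set.indicator_of_mem hw]
        exact Finset.prod_congr rfl fun i _ => by congr 1; simp
      · rw [Set.indicator_of_notMem
            (show w ∉ {W : Fin k → ℝ | (fun i => y i + W i) ∈ S} from hw),
          Set.indicator_of_notMem hw]
    simp_rw [hind]
    exact hT.lintegral_comp (hHm.indicator hS)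
  -- pointwise density comparison
  have factor : ∀ a b : ℝ, g a ≤ ENNReal.ofReal (Real.exp (|a - b| / σ)) * g b := by
    intro a b
    rw [hgdef]
    rw [← ENNReal.ofReal_mul (Real.exp_pos _).le]
    apply ENNReal.ofReal_le_ofReal
    have h1 : (2 * σ)⁻¹ * Real.exp (-|a| / σ) ≤
        (2 * σ)⁻¹ * (Real.exp (|a - b| / σ) * Real.exp (-|b| / σ)) := by
      apply mul_le_mul_of_nonneg_left _ (by positivity)
      rw [← Real.exp_add, ← add_div]
      apply Real.exp_le_exp.mpr
      have h2 : -|a| ≤ |a - b| + -|b| := by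
        have := abs_sub_abs_le_abs_sub b a
        rw [abs_sub_comm b a] at this
        linarith
      exact div_le_div_of_nonneg_right h2 hσ.le
    calc (2 * σ)⁻¹ * Real.exp (-|a| / σ)
        ≤ (2 * σ)⁻¹ * (Real.exp (|a - b| / σ) * Real.exp (-|b| / σ)) := h1
      _ = Real.exp (|a - b| / σ) * ((2 * σ)⁻¹ * Real.exp (-|b| / σ)) := by ring
  have hpt : ∀ t : Fin k → ℝ,
      (∏ i, g (t i - x i)) ≤ ENNReal.ofReal (Real.exp ε) * ∏ i, g (t i - x' i) := by
    intro t
    have step1 : (∏ i, g (t i - x i)) ≤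
        ∏ i, (ENNReal.ofReal (Real.exp (|x i - x' i| / σ)) * g (t i - x' i)) := by
      apply Finset.prod_le_prod' fun i _ => ?_
      have h := factor (t i - x i) (t i - x' i)
      have habs : |(t i - x i) - (t i - x' i)| = |x i - x' i| := by
        rw [show (t i - x i) - (t i - x' i) = -(x i - x' i) by ring, abs_neg]
      rwa [habs] at h
    have step2 : (∏ i, (ENNReal.ofReal (Real.exp (|x i - x' i| / σ)) * g (t i - x' i))) =
        (∏ i, ENNReal.ofReal (Real.exp (|x i - x' i| / σ))) * ∏ i, g (t i - x' i) :=
      Finset.prod_mul_distrib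
    have step3 : (∏ i, ENNReal.ofReal (Real.exp (|x i - x' i| / σ))) =
        ENNReal.ofReal (Real.exp (∑ i, |x i - x' i| / σ)) := by
      rw [Real.exp_sum, ENNReal.ofReal_prod_of_nonneg fun i _ => (Real.exp_pos _).le]
    have hsum : (∑ i, |x i - x' i| / σ) ≤ ε := by
      rw [← Finset.sum_div, div_le_iff₀ hσ]
      have : ε * σ = Δ := by
        rw [hσdef]; field_simp
      rw [this]; exact hsens
    have step4 : ENNReal.ofReal (Real.exp (∑ i, |x i - x' i| / σ)) ≤
        ENNReal.ofReal (Real.exp ε) :=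
      ENNReal.ofReal_le_ofReal (Real.exp_le_exp.mpr hsum)
    calc (∏ i, g (t i - x i))
        ≤ ∏ i, (ENNReal.ofReal (Real.exp (|x i - x' i| / σ)) * g (t i - x' i)) := step1
      _ = (∏ i, ENNReal.ofReal (Real.exp (|x i - x' i| / σ))) * ∏ i, g (t i - x' i) := step2
      _ ≤ ENNReal.ofReal (Real.exp ε) * ∏ i, g (t i - x' i) := by
          rw [step3]; exact mul_le_mul_left step4 _
  -- assemble
  rw [key x, key x']
  have hHm' : Measurable fun t : Fin k → ℝ => ∏ i, g (t i - x' i) :=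
    Finset.measurable_prod _ fun i _ =>
      hgm.comp ((measurable_pi_apply i).sub measurable_const)
  calc ∫⁻ t, S.indicator (fun t => ∏ i, g (t i - x i)) t
        ∂(Measure.pi fun _ : Fin k => (volume : Measure ℝ))
      ≤ ∫⁻ t, S.indicator (fun t => ENNReal.ofReal (Real.exp ε) * ∏ i, g (t i - x' i)) t
        ∂(Measure.pi fun _ : Fin k => (volume : Measure ℝ)) :=
        lintegral_mono fun t => Set.indicator_le_indicator' fun _ => hpt t
    _ = ENNReal.ofReal (Real.exp ε) *
        ∫⁻ t, S.indicator (fun t => ∏ i, g (t i - x' i)) t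
          ∂(Measure.pi fun _ : Fin k => (volume : Measure ℝ)) := by
        simp_rw [Set.indicator_const_mul]
        exact lintegral_const_mul _ (hHm'.indicator hS)
end
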